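/- arXiv:2412.20900 — 2 statements merged into one kernel-verified Lean document; each statement's English description precedes it below -/
import Mathlib

section
/- Let X be a real Banach space such that every closed subspace of X is locally complemented in X. Then P(X) = E(X) < ∞, where E(X) = sup over finite-dimensional subspaces Y of X of E_Y(X) = inf{‖T‖ : T : Y* → X* is a continuous linear extension operator}, and P(X) = sup over finite-dimensional subspaces Y of X of P_Y(X) = inf{‖P‖ : P is a continuous linear projection of X onto Y}. -/
open scoped ENNReal
open NormedSpace

universe u

namespace NormedSpace

/-- The topological dual of a seminormed space `E` (the old `NormedSpace.Dual`). -/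
abbrev Dual (𝕜 : Type*) [NontriviallyNormedField 𝕜] (E : Type*) [SeminormedAddCommGroup E]
    [NormedSpace 𝕜 E] : Type _ :=
  E →L[𝕜] 𝕜

end NormedSpace

variable (X : Type u) [NormedAddCommGroup X] [NormedSpace ℝ X]

/-- `Z` is locally `c`-complemented in `X`: for every finite-dimensional subspace `M` of
`X` there is a continuous linear map `f : M → Z` with `‖f‖ ≤ c` fixing `M ∩ Z`. -/
def LocallyComplemented (Z : Submodule ℝ X) (c : ℝ) : Prop :=
  ∀ M : Submodule ℝ X, FiniteDimensional ℝ M →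
    ∃ f : M →L[ℝ] Z, ‖f‖ ≤ c ∧ ∀ x : M, (x : X) ∈ Z → ((f x : Z) : X) = (x : X)

/-- The norms of continuous linear extension operators `Y* → X*`. -/
def extOpNorms (Y : Submodule ℝ X) : Set ℝ≥0∞ :=
  {c | ∃ T : Dual ℝ Y →L[ℝ] Dual ℝ X,
        (∀ (g : Dual ℝ Y) (y : Y), T g y = g y) ∧ c = (‖T‖₊ : ℝ≥0∞)}

/-- The norms of continuous linear projections of `X` onto `Y`. -/
def projNorms (Y : Submodule ℝ X) : Set ℝ≥0∞ :=
  {c | ∃ P : X →L[ℝ] X, P.comp P = P ∧ LinearMap.range (P : X →ₗ[ℝ] X) = Y ∧ c = (‖P‖₊ : ℝ≥0∞)}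

/-- `E(X)`: supremum over finite-dimensional subspaces `Y` of the minimal norm of an
extension operator `Y* → X*`. -/
noncomputable def EconstX : ℝ≥0∞ :=
  ⨆ (Y : Submodule ℝ X) (_ : FiniteDimensional ℝ Y), sInf (extOpNorms X Y)

/-- `P(X)`: supremum over finite-dimensional subspaces `Y` of the minimal norm of a
continuous linear projection of `X` onto `Y`. -/
noncomputable def PconstX : ℝ≥0∞ :=
  ⨆ (Y : Submodule ℝ X) (_ : FiniteDimensional ℝ Y), sInf (projNorms X Y)

section Aux

open Topology Filter

variable {X}


/-- From an extension operator `T : Y* → X*` (Y finite-dimensional) build a projection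
of `X` onto `Y` with norm at most `‖T‖`. -/
lemma exists_proj_of_extOp (Y : Submodule ℝ X) [FiniteDimensional ℝ Y]
    (T : Dual ℝ Y →L[ℝ] Dual ℝ X) (hT : ∀ (g : Dual ℝ Y) (y : Y), T g y = g y) :
    ∃ P : X →L[ℝ] X, P.comp P = P ∧ LinearMap.range (P : X →ₗ[ℝ] X) = Y ∧ ‖P‖ ≤ ‖T‖ := by
  classical
  set n := Module.finrank ℝ Y
  let b : Module.Basis (Fin n) ℝ Y := Module.finBasis ℝ Y
  let φ : Fin n → Dual ℝ Y := fun i => LinearMap.toContinuousLinearMap (b.coord i)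
  have φ_apply : ∀ i (y : Y), φ i y = b.repr y i := fun i y => rfl
  -- the candidate map into Y
  let p : X → Y := fun x => ∑ i, T (φ i) x • b i
  have hp_add : ∀ x y, p (x + y) = p x + p y := by
    intro x y
    simp only [p, map_add, add_smul, Finset.sum_add_distrib]
  have hp_smul : ∀ (c : ℝ) x, p (c • x) = c • p x := by
    intro c x
    simp only [p, map_smul, smul_eq_mul, Finset.smul_sum, mul_smul]
  -- key: J (p x) = T.flip x where J is the double dual embedding
  have key : ∀ (x : X) (g : Dual ℝ Y), g (p x) = T g x := by
    intro x g
    have hg : g = ∑ i, g (b i) • φ i := by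
      ext y
      simp only [ContinuousLinearMap.sum_apply, ContinuousLinearMap.smul_apply, φ_apply,
        smul_eq_mul]
      calc g y = g (∑ i, b.repr y i • b i) := by rw [Module.Basis.sum_repr]
        _ = ∑ i, g (b i) * b.repr y i := by
            rw [map_sum]; congr 1; ext i; rw [map_smul]; ring_nf
    calc g (p x) = ∑ i, T (φ i) x * g (b i) := by
          simp only [p, map_sum, map_smul, smul_eq_mul]
      _ = T g x := by
          conv_rhs => rw [hg]
          simp only [map_sum, map_smul, ContinuousLinearMap.coe_sum',
            ContinuousLinearMap.coe_smul', Finset.sum_apply, Pi.smul_apply, smul_eq_mul]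
          exact Finset.sum_congr rfl fun i _ => by ring
  have hnorm : ∀ x, ‖p x‖ ≤ ‖T‖ * ‖x‖ := by
    intro x
    have h1 : ‖p x‖ = ‖inclusionInDoubleDualLi ℝ (p x)‖ :=
      ((inclusionInDoubleDualLi ℝ (E := Y)).norm_map (p x)).symm
    have h2 : inclusionInDoubleDualLi ℝ (p x) = T.flip x := by
      ext g
      have : inclusionInDoubleDualLi ℝ (E := Y) (p x) g = g (p x) := rfl
      rw [this, ContinuousLinearMap.flip_apply]
      exact key x g
    rw [h1, h2]
    calc ‖T.flip x‖ ≤ ‖T.flip‖ * ‖x‖ := T.flip.le_opNorm x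
      _ = ‖T‖ * ‖x‖ := by rw [ContinuousLinearMap.opNorm_flip]
  have hfix : ∀ y : Y, p (y : X) = y := by
    intro y
    have : ∀ i, T (φ i) (y : X) = φ i y := fun i => hT (φ i) y
    simp only [p, this, φ_apply]
    exact b.sum_repr y
  let p₀ : X →ₗ[ℝ] Y :=
    { toFun := p, map_add' := hp_add, map_smul' := hp_smul }
  let pc : X →L[ℝ] Y := p₀.mkContinuous ‖T‖ hnorm
  refine ⟨Y.subtypeL.comp pc, ?_, ?_, ?_⟩
  · ext x
    have hx : (Y.subtypeL.comp pc) x = (p x : X) := rfl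
    have : pc ((p x : X)) = p x := hfix (p x)
    simp only [ContinuousLinearMap.comp_apply, hx]
    exact congrArg _ this
  · apply le_antisymm
    · rintro z ⟨x, rfl⟩
      exact (pc x).2
    · intro y hy
      exact ⟨y, congrArg Subtype.val (hfix ⟨y, hy⟩)⟩
  · refine ContinuousLinearMap.opNorm_le_bound _ (norm_nonneg T) fun x => ?_
    exact hnorm x

/-- From a projection onto `Y` build an extension operator with norm at most `‖P‖`. -/
lemma exists_extOp_of_proj (Y : Submodule ℝ X) (P : X →L[ℝ] X)
    (hPP : P.comp P = P) (hPr : LinearMap.range (P : X →ₗ[ℝ] X) = Y) :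
    ∃ T : Dual ℝ Y →L[ℝ] Dual ℝ X,
      (∀ (g : Dual ℝ Y) (y : Y), T g y = g y) ∧ ‖T‖ ≤ ‖P‖ := by
  have hmem : ∀ x, P x ∈ Y := fun x => hPr ▸ LinearMap.mem_range_self (P : X →ₗ[ℝ] X) x
  let P' : X →L[ℝ] Y := P.codRestrict Y hmem
  have hP' : ∀ (g : Dual ℝ Y), ‖g.comp P'‖ ≤ ‖g‖ * ‖P‖ := by
    intro g
    refine ContinuousLinearMap.opNorm_le_bound _ (by positivity) fun x => ?_
    calc ‖g (P' x)‖ ≤ ‖g‖ * ‖P' x‖ := g.le_opNorm _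
      _ = ‖g‖ * ‖P x‖ := rfl
      _ ≤ ‖g‖ * (‖P‖ * ‖x‖) :=
          mul_le_mul_of_nonneg_left (P.le_opNorm x) (norm_nonneg g)
      _ = ‖g‖ * ‖P‖ * ‖x‖ := by ring
  let T₀ : Dual ℝ Y →ₗ[ℝ] Dual ℝ X :=
    { toFun := fun g => g.comp P'
      map_add' := fun g₁ g₂ => by ext x; rfl
      map_smul' := fun c g => by ext x; rfl }
  have hbound : ∀ g, ‖T₀ g‖ ≤ ‖P‖ * ‖g‖ := fun g => by
    rw [mul_comm]; exact hP' g
  let T : Dual ℝ Y →L[ℝ] Dual ℝ X := T₀.mkContinuous ‖P‖ hbound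
  have hfixP : ∀ y ∈ Y, P y = y := by
    intro y hy
    obtain ⟨x, rfl⟩ := hPr.symm ▸ hy
    have := congrArg (fun Q => (Q : X →L[ℝ] X) x) hPP
    exact this
  refine ⟨T, ?_, ?_⟩
  · intro g y
    have : P' (y : X) = y := by
      apply Subtype.ext
      exact hfixP _ y.2
    show g (P' (y : X)) = g y
    rw [this]
  · exact T₀.mkContinuous_norm_le (norm_nonneg P) hbound

lemma exists_proj_of_local (N : Submodule ℝ X) [FiniteDimensional ℝ N] {R : ℝ} (hR : 0 ≤ R)
    (hloc : ∀ M : Submodule ℝ X, FiniteDimensional ℝ M → N ≤ M →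
      ∃ f : M →L[ℝ] N, ‖f‖ ≤ R ∧ ∀ x : M, (x : X) ∈ N → ((f x : N) : X) = (x : X)) :
    ∃ P : X →L[ℝ] X, P.comp P = P ∧ LinearMap.range (P : X →ₗ[ℝ] X) = N ∧ ‖P‖ ≤ R := by
  classical
  let D := {M : Submodule ℝ X // FiniteDimensional ℝ M ∧ N ≤ M}
  haveI : Nonempty D := ⟨⟨N, ‹_›, le_rfl⟩⟩
  haveI : IsDirected D (· ≤ ·) := by
    constructor
    rintro ⟨a, ha, hNa⟩ ⟨b, hb, hNb⟩
    haveI := ha; haveI := hb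
    exact ⟨⟨a ⊔ b, Submodule.finiteDimensional_sup a b, le_trans hNa le_sup_left⟩,
      Subtype.mk_le_mk.2 le_sup_left, Subtype.mk_le_mk.2 le_sup_right⟩
  choose f hf1 hf2 using fun M : D => hloc M.1 M.2.1 M.2.2
  haveI : (Filter.atTop : Filter D).NeBot := Filter.atTop_neBot
  let U : Ultrafilter D := Ultrafilter.of Filter.atTop
  have hU : (U : Filter D) ≤ Filter.atTop := Ultrafilter.of_le _
  -- eventual membership
  have hx_ev : ∀ x : X, ∀ᶠ M : D in Filter.atTop, x ∈ M.1 := by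
    intro x
    have hfd : FiniteDimensional ℝ (N ⊔ Submodule.span ℝ {x} : Submodule ℝ X) := by
      haveI : FiniteDimensional ℝ (Submodule.span ℝ {x} : Submodule ℝ X) := by
        infer_instance
      exact Submodule.finiteDimensional_sup _ _
    refine Filter.eventually_atTop.2 ⟨⟨N ⊔ Submodule.span ℝ {x}, hfd, le_sup_left⟩,
      fun M hM => ?_⟩
    have hx : x ∈ (N ⊔ Submodule.span ℝ {x} : Submodule ℝ X) :=
      Submodule.mem_sup_right (Submodule.mem_span_singleton_self x)
    exact hM hx
  let s : X → D → N := fun x M => if h : x ∈ M.1 then f M ⟨x, h⟩ else 0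
  have hs_ev : ∀ x : X, ∀ᶠ M : D in Filter.atTop, ‖s x M‖ ≤ R * ‖x‖ := by
    intro x
    filter_upwards [hx_ev x] with M hM
    have : s x M = f M ⟨x, hM⟩ := dif_pos hM
    rw [this]
    calc ‖f M ⟨x, hM⟩‖ ≤ ‖f M‖ * ‖(⟨x, hM⟩ : M.1)‖ := (f M).le_opNorm _
      _ ≤ R * ‖x‖ := by
          have h1 : ‖(⟨x, hM⟩ : M.1)‖ = ‖x‖ := rfl
          rw [h1]; exact mul_le_mul_of_nonneg_right (hf1 M) (norm_nonneg x)
  have hlim : ∀ x : X, ∃ y : N, ‖y‖ ≤ R * ‖x‖ ∧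
      Filter.Tendsto (s x) (U : Filter D) (𝓝 y) := by
    intro x
    have hK : IsCompact (Metric.closedBall (0 : N) (R * ‖x‖)) := isCompact_closedBall _ _
    have hmem : Metric.closedBall (0 : N) (R * ‖x‖) ∈ U.map (s x) := by
      have : {M : D | s x M ∈ Metric.closedBall (0 : N) (R * ‖x‖)} ∈ (U : Filter D) := by
        apply hU
        filter_upwards [hs_ev x] with M hM
        simpa [Metric.mem_closedBall, dist_zero_right] using hM
      exact this
    obtain ⟨y, hyK, hy⟩ := hK.ultrafilter_le_nhds (U.map (s x))
      (Filter.le_principal_iff.2 hmem)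
    refine ⟨y, by simpa [Metric.mem_closedBall, dist_zero_right] using hyK, hy⟩
  choose g hgK hg using hlim
  have hadd : ∀ x y : X, g (x + y) = g x + g y := by
    intro x y
    have hev : ∀ᶠ M : D in (U : Filter D), s (x + y) M = s x M + s y M := by
      apply hU
      filter_upwards [hx_ev x, hx_ev y] with M hMx hMy
      have hMxy : x + y ∈ M.1 := M.1.add_mem hMx hMy
      have h1 : s (x+y) M = f M ⟨x+y, hMxy⟩ := dif_pos hMxy
      have h2 : s x M = f M ⟨x, hMx⟩ := dif_pos hMx
      have h3 : s y M = f M ⟨y, hMy⟩ := dif_pos hMy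
      rw [h1, h2, h3, ← map_add]
      rfl
    have t1 : Filter.Tendsto (s (x+y)) (U : Filter D) (𝓝 (g x + g y)) := by
      refine Filter.Tendsto.congr' (Filter.EventuallyEq.symm hev) ?_
      exact (hg x).add (hg y)
    exact tendsto_nhds_unique (hg (x+y)) t1
  have hsmul : ∀ (c : ℝ) (x : X), g (c • x) = c • g x := by
    intro c x
    have hev : ∀ᶠ M : D in (U : Filter D), s (c • x) M = c • s x M := by
      apply hU
      filter_upwards [hx_ev x] with M hMx
      have hMcx : c • x ∈ M.1 := M.1.smul_mem c hMx
      have h1 : s (c • x) M = f M ⟨c • x, hMcx⟩ := dif_pos hMcx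
      have h2 : s x M = f M ⟨x, hMx⟩ := dif_pos hMx
      rw [h1, h2, ← map_smul]
      rfl
    have t1 : Filter.Tendsto (s (c • x)) (U : Filter D) (𝓝 (c • g x)) := by
      refine Filter.Tendsto.congr' (Filter.EventuallyEq.symm hev) ?_
      exact (hg x).const_smul c
    exact tendsto_nhds_unique (hg (c • x)) t1
  have hfix : ∀ (x : X) (hx : x ∈ N), g x = ⟨x, hx⟩ := by
    intro x hx
    have hev : ∀ᶠ M : D in (U : Filter D), s x M = ⟨x, hx⟩ := by
      apply hU
      apply Filter.Eventually.of_forall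
      intro M
      have hxM : x ∈ M.1 := M.2.2 hx
      have h1 : s x M = f M ⟨x, hxM⟩ := dif_pos hxM
      rw [h1]
      exact Subtype.ext (hf2 M ⟨x, hxM⟩ hx)
    have t1 : Filter.Tendsto (s x) (U : Filter D) (𝓝 (⟨x, hx⟩ : N)) := by
      refine Filter.Tendsto.congr' (Filter.EventuallyEq.symm hev) ?_
      exact tendsto_const_nhds
    exact tendsto_nhds_unique (hg x) t1
  let g₀ : X →ₗ[ℝ] N := { toFun := g, map_add' := hadd, map_smul' := hsmul }
  let gc : X →L[ℝ] N := g₀.mkContinuous R hgK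
  refine ⟨N.subtypeL.comp gc, ?_, ?_, ?_⟩
  · ext x
    show (g ((g x : X)) : X) = (g x : X)
    rw [hfix _ (g x).2]
  · apply le_antisymm
    · rintro z ⟨x, rfl⟩
      exact (g x).2
    · intro y hy
      exact ⟨y, congrArg Subtype.val (hfix y hy)⟩
  · refine ContinuousLinearMap.opNorm_le_bound _ hR fun x => ?_
    exact hgK x

lemma proj_fixes {P : X →L[ℝ] X} (hPP : P.comp P = P) {x : X}
    (hx : x ∈ LinearMap.range (P : X →ₗ[ℝ] X)) : P x = x := by
  obtain ⟨w, rfl⟩ := hx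
  exact congrArg (fun Q : X →L[ℝ] X => Q w) hPP

lemma exists_functional_vanishing (S : Submodule ℝ X) (hS : IsClosed (S : Set X))
    {v : X} (hv : v ∉ S) (hd : ∀ y ∈ S, 1 / 2 * ‖v‖ ≤ ‖v - y‖) :
    ∃ φ : Dual ℝ X, (∀ y ∈ S, φ y = 0) ∧ φ v = 1 ∧ ‖φ‖ * ‖v‖ ≤ 2 := by
  haveI : IsClosed (S : Set X) := hS
  have hv0 : v ≠ 0 := fun h => hv (h ▸ S.zero_mem)
  have hvpos : (0 : ℝ) < ‖v‖ := norm_pos_iff.2 hv0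
  -- the quotient space
  have hmkv : (Submodule.Quotient.mk v : X ⧸ S) ≠ 0 := by
    simpa [Submodule.Quotient.mk_eq_zero] using hv
  -- lower bound for the quotient norm
  have hlow : 1 / 2 * ‖v‖ ≤ ‖(Submodule.Quotient.mk v : X ⧸ S)‖ := by
    by_contra hcon
    push_neg at hcon
    have hε : (0 : ℝ) < 1 / 2 * ‖v‖ - ‖(Submodule.Quotient.mk v : X ⧸ S)‖ := by linarith
    obtain ⟨m, hm, hmlt⟩ := Submodule.Quotient.norm_mk_lt
      (Submodule.Quotient.mk v : X ⧸ S) hε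
    have hvm : v - m ∈ S := (Submodule.Quotient.eq S).1 hm.symm
    have := hd (v - m) hvm
    simp only [sub_sub_cancel] at this
    linarith
  -- continuous linear quotient map
  let q₀ : X →ₗ[ℝ] X ⧸ S := S.mkQ
  have hq₀ : ∀ x : X, ‖q₀ x‖ ≤ 1 * ‖x‖ := fun x => by
    simpa [q₀] using Submodule.Quotient.norm_mk_le S x
  let q : X →L[ℝ] X ⧸ S := q₀.mkContinuous 1 hq₀
  obtain ⟨g, hg1, hg2⟩ := exists_dual_vector ℝ (Submodule.Quotient.mk v : X ⧸ S) (norm_ne_zero_iff.2 hmkv)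
  have hnq : ‖(Submodule.Quotient.mk v : X ⧸ S)‖ ≠ 0 := by
    simpa using hmkv
  let φ : Dual ℝ X := (‖(Submodule.Quotient.mk v : X ⧸ S)‖⁻¹ : ℝ) • g.comp q
  refine ⟨φ, ?_, ?_, ?_⟩
  · intro y hy
    have : q y = 0 := by
      show S.mkQ y = 0
      simpa [Submodule.Quotient.mk_eq_zero] using hy
    simp [φ, ContinuousLinearMap.comp_apply, this]
  · have hqv : q v = Submodule.Quotient.mk v := rfl
    simp only [φ, ContinuousLinearMap.smul_apply, ContinuousLinearMap.comp_apply, hqv]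
    rw [hg2]
    simp [RCLike.ofReal_real_eq_id] at hg2 ⊢
    field_simp
  · have hφ : ‖φ‖ ≤ ‖(Submodule.Quotient.mk v : X ⧸ S)‖⁻¹ := by
      have h1 : ‖g.comp q‖ ≤ 1 := by
        calc ‖g.comp q‖ ≤ ‖g‖ * ‖q‖ := g.opNorm_comp_le q
          _ ≤ 1 * 1 := by
              apply mul_le_mul (le_of_eq hg1) ?_ (norm_nonneg q) zero_le_one
              exact q₀.mkContinuous_norm_le zero_le_one hq₀
          _ = 1 := one_mul 1
      have habs : ‖(‖(Submodule.Quotient.mk v : X ⧸ S)‖⁻¹ : ℝ)‖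
          = ‖(Submodule.Quotient.mk v : X ⧸ S)‖⁻¹ := by
        rw [Real.norm_eq_abs, abs_of_nonneg (inv_nonneg.2 (norm_nonneg _))]
      calc ‖φ‖ ≤ ‖(‖(Submodule.Quotient.mk v : X ⧸ S)‖⁻¹ : ℝ)‖ * ‖g.comp q‖ :=
            ContinuousLinearMap.opNorm_smul_le _ _
        _ ≤ ‖(Submodule.Quotient.mk v : X ⧸ S)‖⁻¹ * 1 := by
            rw [habs]
            exact mul_le_mul_of_nonneg_left h1 (inv_nonneg.2 (norm_nonneg _))
        _ = ‖(Submodule.Quotient.mk v : X ⧸ S)‖⁻¹ := mul_one _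
    have h2 : ‖(Submodule.Quotient.mk v : X ⧸ S)‖⁻¹ ≤ 2 / ‖v‖ := by
      rw [inv_le_comm₀ (lt_of_lt_of_le (by positivity) hlow) (by positivity)]
      calc (2 / ‖v‖)⁻¹ = 1 / 2 * ‖v‖ := by field_simp
        _ ≤ ‖(Submodule.Quotient.mk v : X ⧸ S)‖ := hlow
    calc ‖φ‖ * ‖v‖ ≤ 2 / ‖v‖ * ‖v‖ :=
          mul_le_mul_of_nonneg_right (le_trans hφ h2) (norm_nonneg v)
      _ = 2 := by field_simp

lemma chain_proj [CompleteSpace X] :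
    ∀ (k : ℕ) (S Y : Submodule ℝ X) [FiniteDimensional ℝ Y], S ≤ Y →
    Module.finrank ℝ Y ≤ Module.finrank ℝ S + k → ∀ q : ℝ, 0 ≤ q →
    (∃ P : X →L[ℝ] X, P.comp P = P ∧ LinearMap.range (P : X →ₗ[ℝ] X) = S ∧ ‖P‖ ≤ q) →
    ∃ P : X →L[ℝ] X, P.comp P = P ∧ LinearMap.range (P : X →ₗ[ℝ] X) = Y ∧ ‖P‖ ≤ 3 ^ k * (q + 1) := by
  intro k
  induction k with
  | zero =>
    intro S Y _ hSY hrank q hq hP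
    have hSeq : S = Y := Submodule.eq_of_le_of_finrank_le hSY (by simpa using hrank)
    obtain ⟨P, h1, h2, h3⟩ := hP
    exact ⟨P, h1, hSeq ▸ h2, by simpa using le_trans h3 (by linarith)⟩
  | succ k ih =>
    intro S Y hYfd hSY hrank q hq hP
    haveI := hYfd
    haveI : FiniteDimensional ℝ S := Submodule.finiteDimensional_of_le hSY
    by_cases hSeq : S = Y
    · obtain ⟨P, h1, h2, h3⟩ := hP
      refine ⟨P, h1, hSeq ▸ h2, le_trans h3 ?_⟩
      have h4 : (1 : ℝ) ≤ 3 ^ (k + 1) := one_le_pow₀ (by norm_num)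
      nlinarith
    · -- pick v ∈ Y \ S with dist(v, S) ≥ ‖v‖/2, via Riesz's lemma inside Y
      have hSlt : S < Y := lt_of_le_of_ne hSY hSeq
      obtain ⟨v0, hv0Y, hv0S⟩ := SetLike.exists_of_lt hSlt
      set F : Submodule ℝ Y := Submodule.comap Y.subtype S with hF
      have hFc : IsClosed (F : Set Y) := Submodule.closed_of_finiteDimensional F
      obtain ⟨x₀, hx₀F, hdist⟩ := riesz_lemma (𝕜 := ℝ) hFc
        ⟨⟨v0, hv0Y⟩, fun hc => hv0S hc⟩ (show (1:ℝ)/2 < 1 by norm_num)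
      set v : X := (x₀ : X) with hvdef
      have hvY : v ∈ Y := x₀.2
      have hvS : v ∉ S := hx₀F
      have hd : ∀ y ∈ S, 1 / 2 * ‖v‖ ≤ ‖v - y‖ := by
        intro y hy
        have hyY : y ∈ Y := hSY hy
        have h1 : (⟨y, hyY⟩ : Y) ∈ F := hy
        have h2 : ‖x₀ - (⟨y, hyY⟩ : Y)‖ = ‖v - y‖ := rfl
        have := hdist _ h1
        rw [h2] at this
        simpa using this
      obtain ⟨φ, hφ0, hφv, hφn⟩ := exists_functional_vanishing S
        (Submodule.closed_of_finiteDimensional S) hvS hd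
      obtain ⟨P, hPP, hPr, hPn⟩ := hP
      set Pv : X →L[ℝ] X := φ.smulRight v with hPv
      have hPv_apply : ∀ x, Pv x = φ x • v := fun x => rfl
      set P' : X →L[ℝ] X := P.comp (ContinuousLinearMap.id ℝ X - Pv) + Pv with hP'
      have hP'_apply : ∀ x, P' x = P (x - φ x • v) + φ x • v := fun x => rfl
      set S' : Submodule ℝ X := S ⊔ Submodule.span ℝ {v} with hS'
      have hfixS : ∀ w ∈ S, P w = w := fun w hw => proj_fixes hPP (hPr.symm ▸ hw)
      have hmem' : ∀ x, P' x ∈ S' := by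
        intro x
        rw [hP'_apply]
        refine Submodule.add_mem _ (Submodule.mem_sup_left ?_) (Submodule.mem_sup_right ?_)
        · exact hPr ▸ LinearMap.mem_range_self (P : X →ₗ[ℝ] X) _
        · exact Submodule.smul_mem _ _ (Submodule.mem_span_singleton_self v)
      have hfix' : ∀ w ∈ S', P' w = w := by
        intro w hw
        obtain ⟨s, hs, r, hr, rfl⟩ := Submodule.mem_sup.1 hw
        obtain ⟨t, rfl⟩ := Submodule.mem_span_singleton.1 hr
        have hφw : φ (s + t • v) = t := by
          rw [map_add, hφ0 s hs, map_smul, hφv, smul_eq_mul, mul_one, zero_add]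
        rw [hP'_apply, hφw]
        have : s + t • v - t • v = s := by abel
        rw [this, hfixS s hs]
      have hrange' : LinearMap.range (P' : X →ₗ[ℝ] X) = S' := by
        apply le_antisymm
        · rintro z ⟨x, rfl⟩
          exact hmem' x
        · intro w hw
          exact ⟨w, hfix' w hw⟩
      have hidem' : P'.comp P' = P' := by
        ext x
        exact hfix' (P' x) (hmem' x)
      have hPvn : ∀ x, ‖Pv x‖ ≤ 2 * ‖x‖ := by
        intro x
        rw [hPv_apply, norm_smul]
        calc ‖φ x‖ * ‖v‖ ≤ ‖φ‖ * ‖x‖ * ‖v‖ :=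
              mul_le_mul_of_nonneg_right (φ.le_opNorm x) (norm_nonneg v)
          _ = ‖φ‖ * ‖v‖ * ‖x‖ := by ring
          _ ≤ 2 * ‖x‖ := mul_le_mul_of_nonneg_right hφn (norm_nonneg x)
      have hP'n : ‖P'‖ ≤ 3 * q + 2 := by
        refine ContinuousLinearMap.opNorm_le_bound _ (by linarith) fun x => ?_
        rw [hP'_apply]
        calc ‖P (x - φ x • v) + φ x • v‖ ≤ ‖P (x - φ x • v)‖ + ‖φ x • v‖ := norm_add_le _ _
          _ ≤ ‖P‖ * ‖x - φ x • v‖ + 2 * ‖x‖ := by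
              refine add_le_add (P.le_opNorm _) ?_
              simpa [hPv_apply] using hPvn x
          _ ≤ ‖P‖ * (‖x‖ + 2 * ‖x‖) + 2 * ‖x‖ := by
              refine add_le_add (mul_le_mul_of_nonneg_left ?_ (norm_nonneg P)) le_rfl
              calc ‖x - φ x • v‖ ≤ ‖x‖ + ‖φ x • v‖ := norm_sub_le _ _
                _ ≤ ‖x‖ + 2 * ‖x‖ := by
                    refine add_le_add le_rfl ?_
                    simpa [hPv_apply] using hPvn x
          _ ≤ q * (3 * ‖x‖) + 2 * ‖x‖ := by
              have hx : (0:ℝ) ≤ ‖x‖ := norm_nonneg x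
              have := mul_le_mul_of_nonneg_right hPn (by linarith : (0:ℝ) ≤ ‖x‖ + 2 * ‖x‖)
              nlinarith
          _ = (3 * q + 2) * ‖x‖ := by ring
      have hS'Y : S' ≤ Y := by
        rw [hS']
        refine sup_le hSY ?_
        rw [Submodule.span_le, Set.singleton_subset_iff]
        exact hvY
      haveI : FiniteDimensional ℝ S' := Submodule.finiteDimensional_of_le hS'Y
      have hSS' : S < S' := by
        refine lt_of_le_of_ne le_sup_left (fun hc => hvS ?_)
        rw [hc]
        exact Submodule.mem_sup_right (Submodule.mem_span_singleton_self v)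
      have hrank' : Module.finrank ℝ Y ≤ Module.finrank ℝ S' + k := by
        have := Submodule.finrank_lt_finrank_of_lt (t := S') hSS'
        omega
      obtain ⟨Pf, hPf1, hPf2, hPf3⟩ := ih S' Y hS'Y hrank' (3 * q + 2) (by linarith)
        ⟨P', hidem', hrange', hP'n⟩
      refine ⟨Pf, hPf1, hPf2, le_trans hPf3 ?_⟩
      have : (3:ℝ) ^ k * (3 * q + 2 + 1) = 3 ^ (k+1) * (q + 1) := by
        rw [pow_succ]; ring
      rw [this]

noncomputable def KerSet (Φ : Finset (Dual ℝ X)) : Submodule ℝ X :=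
  ⨅ φ ∈ Φ, LinearMap.ker (φ : X →ₗ[ℝ] ℝ)

lemma mem_KerSet {Φ : Finset (Dual ℝ X)} {x : X} :
    x ∈ KerSet Φ ↔ ∀ φ ∈ Φ, φ x = 0 := by
  simp [KerSet, Submodule.mem_iInf, LinearMap.mem_ker]

lemma KerSet_closed (Φ : Finset (Dual ℝ X)) : IsClosed ((KerSet Φ : Submodule ℝ X) : Set X) := by
  have : ((KerSet Φ : Submodule ℝ X) : Set X) = ⋂ φ ∈ Φ, (LinearMap.ker (φ : X →ₗ[ℝ] ℝ) : Set X) := by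
    ext x
    simp [mem_KerSet, LinearMap.mem_ker]
  rw [this]
  exact isClosed_biInter fun φ _ => by
    have : (LinearMap.ker (φ : X →ₗ[ℝ] ℝ) : Set X) = φ ⁻¹' {0} := rfl
    rw [this]
    exact (isClosed_singleton).preimage φ.continuous

lemma KerSet_anti {Φ Φ' : Finset (Dual ℝ X)} (h : Φ ⊆ Φ') : KerSet Φ' ≤ KerSet Φ := by
  intro x hx
  rw [mem_KerSet] at hx ⊢
  exact fun φ hφ => hx φ (h hφ)

/-- Mazur's lemma: finitely many functionals almost-norming a finite-dimensional subspace. -/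
lemma mazur_finset (F : Submodule ℝ X) :
    ∃ Φ : Finset (Dual ℝ X), FiniteDimensional ℝ F →
      ∀ f ∈ F, ∀ h ∈ KerSet Φ, ‖f‖ ≤ 2 * ‖f + h‖ := by
  classical
  by_cases hFd : FiniteDimensional ℝ F
  swap
  · exact ⟨∅, fun hc => absurd hc hFd⟩
  -- the unit sphere of F, as a subset of X, is compact
  set A : Set X := Subtype.val '' (Metric.sphere (0 : F) 1) with hA
  have hAc : IsCompact A := (isCompact_sphere (0 : F) 1).image continuous_subtype_val
  have hcover : A ⊆ ⋃ x ∈ A, Metric.ball x (1/4) :=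
    fun x hx => Set.mem_biUnion hx (Metric.mem_ball_self (by norm_num))
  obtain ⟨t, htA, htfin, htcover⟩ :=
    hAc.elim_finite_subcover_image (fun x _ => Metric.isOpen_ball) hcover
  set ψ : X → Dual ℝ X := fun z =>
    if hz : z ≠ 0 then (exists_dual_vector ℝ z (norm_ne_zero_iff.2 hz)).choose else 0 with hψ
  have hψ_spec : ∀ z : X, z ≠ 0 → ‖ψ z‖ = 1 ∧ (ψ z) z = ‖z‖ := by
    intro z hz
    have := (exists_dual_vector ℝ z (norm_ne_zero_iff.2 hz)).choose_spec
    rw [hψ]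
    simp only [dif_pos hz]
    exact ⟨this.1, by exact_mod_cast this.2⟩
  refine ⟨htfin.toFinset.image ψ, fun _ => ?_⟩
  intro f hf h hker
  rcases eq_or_ne f 0 with rfl | hf0
  · simpa using by positivity
  have hfn : (0:ℝ) < ‖f‖ := norm_pos_iff.2 hf0
  set u : X := ‖f‖⁻¹ • f with hu
  have huA : u ∈ A := by
    refine ⟨⟨u, F.smul_mem _ hf⟩, ?_, rfl⟩
    rw [Metric.mem_sphere]
    have : ‖(⟨u, F.smul_mem _ hf⟩ : F)‖ = ‖u‖ := rfl
    rw [dist_zero_right, this, hu, norm_smul, norm_inv, Real.norm_eq_abs,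
      abs_of_pos hfn, inv_mul_cancel₀ (ne_of_gt hfn)]
  obtain ⟨z, hzt, hz⟩ := Set.mem_iUnion₂.1 (htcover huA)
  have hzA : z ∈ A := htA hzt
  have hz1 : ‖z‖ = 1 := by
    obtain ⟨y, hy, rfl⟩ := hzA
    rw [Metric.mem_sphere, dist_zero_right] at hy
    exact hy
  have hz0 : z ≠ 0 := by
    intro hzz; rw [hzz, norm_zero] at hz1; norm_num at hz1
  obtain ⟨hψn, hψz⟩ := hψ_spec z hz0
  have hψΦ : ψ z ∈ htfin.toFinset.image ψ := by
    refine Finset.mem_image.2 ⟨z, ?_, rfl⟩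
    simpa using hzt
  have hker' : (ψ z) h = 0 := mem_KerSet.1 hker _ hψΦ
  -- estimate
  have hdist : ‖u - z‖ < 1/4 := by
    rw [Metric.mem_ball] at hz
    simpa [dist_eq_norm] using hz
  have key : (1:ℝ)/2 ≤ ‖u + ‖f‖⁻¹ • h‖ := by
    have h1 : (ψ z) (u + ‖f‖⁻¹ • h) = (ψ z) z + (ψ z) (u - z) := by
      have hh0 : (ψ z) (‖f‖⁻¹ • h) = 0 := by rw [map_smul, hker', smul_zero]
      rw [map_add, hh0, add_zero, map_sub]
      ring
    have h2 : |(ψ z) (u - z)| ≤ ‖u - z‖ := by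
      calc |(ψ z) (u - z)| ≤ ‖ψ z‖ * ‖u - z‖ := (ψ z).le_opNorm _
        _ = ‖u - z‖ := by rw [hψn, one_mul]
    have h3 : (1:ℝ)/2 ≤ (ψ z) (u + ‖f‖⁻¹ • h) := by
      rw [h1, hψz, hz1]
      have := abs_le.1 h2
      linarith
    calc (1:ℝ)/2 ≤ (ψ z) (u + ‖f‖⁻¹ • h) := h3
      _ ≤ |(ψ z) (u + ‖f‖⁻¹ • h)| := le_abs_self _
      _ ≤ ‖ψ z‖ * ‖u + ‖f‖⁻¹ • h‖ := (ψ z).le_opNorm _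
      _ = ‖u + ‖f‖⁻¹ • h‖ := by rw [hψn, one_mul]
  have heq : u + ‖f‖⁻¹ • h = ‖f‖⁻¹ • (f + h) := by
    rw [hu, smul_add]
  rw [heq, norm_smul, norm_inv, Real.norm_eq_abs, abs_of_pos hfn] at key
  calc ‖f‖ = 2 * ‖f‖ * (1/2) := by ring
    _ ≤ 2 * ‖f‖ * (‖f‖⁻¹ * ‖f + h‖) := by
        refine mul_le_mul_of_nonneg_left key (by positivity)
    _ = 2 * ‖f + h‖ := by field_simp

lemma uniform_of_bounded [CompleteSpace X] (Φ : Finset (Dual ℝ X)) (R : ℝ) (hR : 0 ≤ R)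
    (hbdd : ∀ N M : Submodule ℝ X, FiniteDimensional ℝ N → FiniteDimensional ℝ M →
      N ≤ KerSet Φ → N ≤ M →
      ∃ f : M →L[ℝ] N, ‖f‖ ≤ R ∧ ∀ x : M, (x : X) ∈ N → ((f x : N) : X) = (x : X))
    (Y : Submodule ℝ X) (hY : FiniteDimensional ℝ Y) :
    ∃ P : X →L[ℝ] X, P.comp P = P ∧ LinearMap.range (P : X →ₗ[ℝ] X) = Y ∧
      ‖P‖ ≤ 3 ^ Φ.card * (R + 1) := by
  classical
  haveI := hY
  set N : Submodule ℝ X := Y ⊓ KerSet Φ with hN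
  haveI : FiniteDimensional ℝ N := Submodule.finiteDimensional_of_le inf_le_left
  have hP₀ : ∃ P : X →L[ℝ] X, P.comp P = P ∧ LinearMap.range (P : X →ₗ[ℝ] X) = N ∧ ‖P‖ ≤ R := by
    apply exists_proj_of_local N hR
    intro M hM hNM
    exact hbdd N M ‹_› hM inf_le_right hNM
  have hrank : Module.finrank ℝ Y ≤ Module.finrank ℝ N + Φ.card := by
    let L : Y →ₗ[ℝ] (Φ → ℝ) := LinearMap.pi (fun φ : Φ => (φ.1 : X →ₗ[ℝ] ℝ).comp Y.subtype)
    have hker : LinearMap.ker L = Submodule.comap Y.subtype N := by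
      ext y
      simp only [LinearMap.mem_ker, Submodule.mem_comap, hN, Submodule.mem_inf, mem_KerSet,
        funext_iff, L, LinearMap.pi_apply, LinearMap.comp_apply, Submodule.coe_subtype,
        Pi.zero_apply]
      constructor
      · intro hy
        exact ⟨y.2, fun φ hφ => by simpa using hy ⟨φ, hφ⟩⟩
      · rintro ⟨-, hy⟩ ⟨φ, hφ⟩
        simpa using hy φ hφ
    have h1 : Module.finrank ℝ (LinearMap.range L) + Module.finrank ℝ (LinearMap.ker L)
        = Module.finrank ℝ Y := LinearMap.finrank_range_add_finrank_ker L
    have h2 : Module.finrank ℝ (LinearMap.ker L) = Module.finrank ℝ N := by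
      rw [hker]
      exact LinearEquiv.finrank_eq (Submodule.comapSubtypeEquivOfLe inf_le_left)
    have h3 : Module.finrank ℝ (LinearMap.range L) ≤ Φ.card := by
      have := Submodule.finrank_le (LinearMap.range L)
      rwa [Module.finrank_pi ℝ, Fintype.card_coe] at this
    omega
  exact chain_proj Φ.card N Y inf_le_left hrank R hR hP₀

lemma head_lemma [CompleteSpace X] (W H Wtot : Submodule ℝ X) [FiniteDimensional ℝ W]
    (hH : IsClosed (H : Set X))
    (hmaz : ∀ f ∈ W, ∀ h ∈ H, ‖f‖ ≤ 2 * ‖f + h‖)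
    (hcov : Wtot ≤ W ⊔ H) :
    ∃ head : Wtot.topologicalClosure →L[ℝ] X,
      (∀ z : Wtot.topologicalClosure, head z ∈ W) ∧
      (∀ z : Wtot.topologicalClosure, (z : X) - head z ∈ H) ∧
      (∀ z : Wtot.topologicalClosure, ‖head z‖ ≤ 2 * ‖z‖) ∧
      (∀ (z : Wtot.topologicalClosure) (w : X), w ∈ W → (z : X) - w ∈ H → head z = w) := by
  classical
  haveI : IsClosed (H : Set X) := hH
  set Z := Wtot.topologicalClosure with hZdef
  have hWH : ∀ w ∈ W, w ∈ H → w = 0 := by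
    intro w hwW hwH
    have := hmaz w hwW (-w) (H.neg_mem hwH)
    simp only [add_neg_cancel, norm_zero, mul_zero] at this
    exact norm_eq_zero.1 (le_antisymm this (norm_nonneg w))
  let q₀ : X →ₗ[ℝ] X ⧸ H := H.mkQ
  have hq₀ : ∀ x : X, ‖q₀ x‖ ≤ 1 * ‖x‖ := fun x => by
    simpa [q₀] using Submodule.Quotient.norm_mk_le H x
  let q : X →L[ℝ] X ⧸ H := q₀.mkContinuous 1 hq₀
  have hq0 : ∀ x : X, q₀ x = 0 ↔ x ∈ H := fun x => by
    rw [← LinearMap.mem_ker, Submodule.ker_mkQ]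
  let A : W →ₗ[ℝ] X ⧸ H := q₀.comp W.subtype
  have hAinj : Function.Injective A := by
    intro a b hab
    have h1 : q₀ ((a : X) - b) = 0 := by
      rw [map_sub]
      exact sub_eq_zero_of_eq hab
    have h2 : ((a : X) - b) ∈ H := (hq0 _).1 h1
    have h3 : ((a : X) - b) ∈ W := W.sub_mem a.2 b.2
    have := hWH _ h3 h2
    exact Subtype.ext (sub_eq_zero.1 this)
  haveI : FiniteDimensional ℝ (LinearMap.range A) := Module.Finite.range A
  have hAr_closed : IsClosed ((LinearMap.range A : Submodule ℝ (X ⧸ H)) : Set (X ⧸ H)) :=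
    Submodule.closed_of_finiteDimensional _
  have hmemW : ∀ x ∈ Wtot, q₀ x ∈ LinearMap.range A := by
    intro x hx
    obtain ⟨w, hw, hh, hhH, rfl⟩ := Submodule.mem_sup.1 (hcov hx)
    refine ⟨⟨w, hw⟩, ?_⟩
    have : q₀ hh = 0 := (hq0 _).2 hhH
    show q₀ w = q₀ (w + hh)
    rw [map_add, this, add_zero]
  have hmemZ : ∀ z : Z, q₀ (z : X) ∈ LinearMap.range A := by
    intro z
    have hz : (z : X) ∈ closure (Wtot : Set X) := by
      rw [← Submodule.topologicalClosure_coe]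
      exact z.2
    have hmapsto : Set.MapsTo q (Wtot : Set X)
        ((LinearMap.range A : Submodule ℝ (X ⧸ H)) : Set (X ⧸ H)) := fun x hx => hmemW x hx
    have := map_mem_closure q.continuous hz hmapsto
    rwa [hAr_closed.closure_eq] at this
  let e : W ≃ₗ[ℝ] LinearMap.range A := LinearEquiv.ofInjective A hAinj
  let r : Z →ₗ[ℝ] LinearMap.range A :=
    LinearMap.codRestrict (LinearMap.range A) (q₀.comp Z.subtype) hmemZ
  have hr_cont : Continuous r := by
    apply Continuous.subtype_mk
    exact q.continuous.comp continuous_subtype_val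
  let head₀ : Z →ₗ[ℝ] X := W.subtype.comp ((e.symm : LinearMap.range A →ₗ[ℝ] W).comp r)
  have hhead_cont : Continuous head₀ := by
    refine continuous_subtype_val.comp ?_
    exact ((e.symm : LinearMap.range A →ₗ[ℝ] W).continuous_of_finiteDimensional).comp hr_cont
  let head : Z →L[ℝ] X := ⟨head₀, hhead_cont⟩
  have hW : ∀ z : Z, head z ∈ W := fun z => (e.symm (r z)).2
  have hqhead : ∀ z : Z, q₀ (head z) = q₀ (z : X) := by
    intro z
    have h1 : A (e.symm (r z)) = (r z : X ⧸ H) := by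
      have := LinearEquiv.ofInjective_apply (f := A) (h := hAinj) (e.symm (r z))
      rw [show e (e.symm (r z)) = r z from e.apply_symm_apply (r z)] at this
      exact this.symm
    have h2 : (r z : X ⧸ H) = q₀ (z : X) := rfl
    show q₀ ((e.symm (r z) : W) : X) = q₀ (z : X)
    rw [← h2, ← h1]
    rfl
  have hHmem : ∀ z : Z, (z : X) - head z ∈ H := by
    intro z
    rw [← hq0]
    rw [map_sub, hqhead, sub_self]
  have huniq : ∀ (z : Z) (w : X), w ∈ W → (z : X) - w ∈ H → head z = w := by
    intro z w hwW hwH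
    have h1 : head z - w ∈ W := W.sub_mem (hW z) hwW
    have h2 : head z - w ∈ H := by
      have := H.sub_mem (hHmem z) hwH
      simpa [sub_sub_sub_cancel_left] using H.neg_mem this
    exact sub_eq_zero.1 (hWH _ h1 h2)
  refine ⟨head, hW, hHmem, ?_, huniq⟩
  -- norm bound, first on the dense subset
  have hdense_bound : ∀ z : Z, (z : X) ∈ Wtot → ‖head z‖ ≤ 2 * ‖z‖ := by
    intro z hz
    obtain ⟨w, hw, hh, hhH, hzeq⟩ := Submodule.mem_sup.1 (hcov hz)
    have hwz : head z = w := huniq z w hw (by rw [← hzeq]; simpa using hhH)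
    rw [hwz]
    have hnz : ‖z‖ = ‖w + hh‖ := by
      show ‖(z : X)‖ = ‖w + hh‖
      rw [← hzeq]
    rw [hnz]
    exact hmaz w hw hh hhH
  intro z
  have hdense : z ∈ closure {z : Z | (z : X) ∈ Wtot} := by
    rw [closure_subtype]
    have himg : Subtype.val '' {z : Z | (z : X) ∈ Wtot} = (Wtot : Set X) := by
      ext x
      constructor
      · rintro ⟨z, hz, rfl⟩; exact hz
      · intro hx
        exact ⟨⟨x, Wtot.le_topologicalClosure hx⟩, hx, rfl⟩
    rw [himg, ← Submodule.topologicalClosure_coe]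
    exact z.2
  have hclosed : IsClosed {z : Z | ‖head z‖ ≤ 2 * ‖z‖} :=
    isClosed_le (head.continuous.norm) (continuous_const.mul continuous_norm)
  have hsub : {z : Z | (z : X) ∈ Wtot} ⊆ {z : Z | ‖head z‖ ≤ 2 * ‖z‖} :=
    fun z hz => hdense_bound z hz
  exact (closure_minimal hsub hclosed) hdense

lemma sInf_proj_eq_sInf_ext (Y : Submodule ℝ X) [FiniteDimensional ℝ Y] :
    sInf (projNorms X Y) = sInf (extOpNorms X Y) := by
  have hcast : ∀ (a b : ℝ), ‖a‖ ≤ ‖b‖ → True := fun _ _ _ => trivial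
  apply le_antisymm
  · apply sInf_le_sInf_of_isCoinitialFor
    rintro c ⟨T, hT, rfl⟩
    obtain ⟨P, h1, h2, h3⟩ := exists_proj_of_extOp Y T hT
    refine ⟨(‖P‖₊ : ℝ≥0∞), ⟨P, h1, h2, rfl⟩, ?_⟩
    refine ENNReal.coe_le_coe.2 ?_
    rw [← norm_toNNReal, ← norm_toNNReal]
    exact Real.toNNReal_le_toNNReal h3
  · apply sInf_le_sInf_of_isCoinitialFor
    rintro c ⟨P, h1, h2, rfl⟩
    obtain ⟨T, hT, h3⟩ := exists_extOp_of_proj Y P h1 h2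
    refine ⟨(‖T‖₊ : ℝ≥0∞), ⟨T, hT, rfl⟩, ?_⟩
    refine ENNReal.coe_le_coe.2 ?_
    rw [← norm_toNNReal, ← norm_toNNReal]
    exact Real.toNNReal_le_toNNReal h3

lemma exists_uniform_bound [CompleteSpace X]
    (h : ∀ Z : Submodule ℝ X, IsClosed (Z : Set X) →
      ∃ c : ℝ, 0 < c ∧ LocallyComplemented X Z c) :
    ∃ B : ℝ, ∀ Y : Submodule ℝ X, FiniteDimensional ℝ Y →
      ∃ P : X →L[ℝ] X, P.comp P = P ∧ LinearMap.range (P : X →ₗ[ℝ] X) = Y ∧ ‖P‖ ≤ B := by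
  classical
  by_contra hcon
  push_neg at hcon
  -- Step 1: in every finite-codimensional kernel subspace there are arbitrarily bad pairs
  have hbad : ∀ (Φ : Finset (Dual ℝ X)) (R : ℝ),
      ∃ N M : Submodule ℝ X, FiniteDimensional ℝ N ∧ FiniteDimensional ℝ M ∧
        N ≤ KerSet Φ ∧ N ≤ M ∧
        ∀ f : M →L[ℝ] N, (∀ x : M, (x : X) ∈ N → ((f x : N) : X) = (x : X)) → R < ‖f‖ := by
    intro Φ R
    by_contra hc
    push_neg at hc
    have hbdd : ∀ N M : Submodule ℝ X, FiniteDimensional ℝ N → FiniteDimensional ℝ M →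
        N ≤ KerSet Φ → N ≤ M →
        ∃ f : M →L[ℝ] N, ‖f‖ ≤ max R 0 ∧
          ∀ x : M, (x : X) ∈ N → ((f x : N) : X) = (x : X) := by
      intro N M hN hM hker hNM
      obtain ⟨f, hfix, hfn⟩ := hc N M hN hM hker hNM
      exact ⟨f, le_trans hfn (le_max_left _ _), hfix⟩
    obtain ⟨Y, hYfd, hY⟩ := hcon (3 ^ Φ.card * (max R 0 + 1))
    obtain ⟨P, h1, h2, h3⟩ := uniform_of_bounded Φ (max R 0) (le_max_right _ _) hbdd Y hYfd
    exact absurd h3 (not_le.2 (hY P h1 h2))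
  -- Skolemize
  choose Nf Mf hNfd hMfd hNker hNMle hbadf using hbad
  choose mz hmz using fun F : Submodule ℝ X => mazur_finset F
  -- the recursive construction
  let step : ℕ → Finset (Dual ℝ X) × Submodule ℝ X → Finset (Dual ℝ X) × Submodule ℝ X :=
    fun n p => (p.1 ∪ mz (p.2 ⊔ Nf p.1 ((n : ℝ) + 1)), p.2 ⊔ Nf p.1 ((n : ℝ) + 1))
  let st : ℕ → Finset (Dual ℝ X) × Submodule ℝ X :=
    fun n => Nat.rec (∅, ⊥) (fun m ih => step m ih) n
  let An : ℕ → Finset (Dual ℝ X) := fun n => (st n).1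
  let Wn : ℕ → Submodule ℝ X := fun n => (st n).2
  let Nn : ℕ → Submodule ℝ X := fun n => Nf (An n) ((n : ℝ) + 1)
  let Mn : ℕ → Submodule ℝ X := fun n => Mf (An n) ((n : ℝ) + 1)
  have hW0 : Wn 0 = ⊥ := rfl
  have hWs : ∀ n, Wn (n + 1) = Wn n ⊔ Nn n := fun n => rfl
  have hAs : ∀ n, An (n + 1) = An n ∪ mz (Wn (n + 1)) := fun n => rfl
  -- finite dimensionality
  have hWfd : ∀ n, FiniteDimensional ℝ (Wn n) := by
    intro n
    induction n with
    | zero => rw [hW0]; infer_instance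
    | succ n ih =>
      rw [hWs]
      haveI := ih
      haveI := hNfd (An n) ((n : ℝ) + 1)
      exact Submodule.finiteDimensional_sup _ _
  -- monotonicity
  have hAmono : Monotone An := monotone_nat_of_le_succ fun n => by
    rw [hAs]; exact Finset.subset_union_left
  have hWmono : Monotone Wn := monotone_nat_of_le_succ fun n => by
    rw [hWs]; exact le_sup_left
  -- the key tail containment
  have htail : ∀ ℓ i : ℕ, 1 ≤ ℓ → ℓ ≤ i → Nn i ≤ KerSet (mz (Wn ℓ)) := by
    intro ℓ i hℓ hi
    have h1 : Nn i ≤ KerSet (An i) := hNker _ _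
    have h2 : mz (Wn ℓ) ⊆ An ℓ := by
      cases ℓ with
      | zero => omega
      | succ k =>
        rw [hAs]
        exact Finset.subset_union_right
    have h3 : An ℓ ⊆ An i := hAmono hi
    exact le_trans h1 (KerSet_anti (h2.trans h3))
  -- Mazur inequality at each level
  have hmazlev : ∀ ℓ : ℕ, ∀ f ∈ Wn ℓ, ∀ hh ∈ KerSet (mz (Wn ℓ)), ‖f‖ ≤ 2 * ‖f + hh‖ :=
    fun ℓ => hmz (Wn ℓ) (hWfd ℓ)
  -- the total union and its closure
  let Wo : ℕ →o Submodule ℝ X := ⟨Wn, hWmono⟩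
  let Wtot : Submodule ℝ X := ⨆ n, Wo n
  have hWtot_le : ∀ n, Wn n ≤ Wtot := fun n => le_iSup (fun k => Wo k) n
  have hcov : ∀ ℓ : ℕ, 1 ≤ ℓ → Wtot ≤ Wn ℓ ⊔ KerSet (mz (Wn ℓ)) := by
    intro ℓ hℓ
    refine iSup_le fun m => ?_
    induction m with
    | zero => rw [show Wo 0 = Wn 0 from rfl, hW0]; exact bot_le
    | succ m ih =>
      rw [show Wo (m+1) = Wn (m+1) from rfl, hWs]
      by_cases hm : m + 1 ≤ ℓ
      · exact le_trans (by rw [← hWs]; exact hWmono hm) le_sup_left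
      · push_neg at hm
        refine sup_le ih ?_
        exact le_trans (htail ℓ m hℓ (by omega)) le_sup_right
  let Z : Submodule ℝ X := Wtot.topologicalClosure
  have hZc : IsClosed (Z : Set X) := Submodule.isClosed_topologicalClosure _
  obtain ⟨c, hcpos, hloc⟩ := h Z hZc
  -- choose the bad stage
  set n : ℕ := max 1 (Nat.ceil (4 * c)) with hn
  have hn1 : 1 ≤ n := le_max_left _ _
  have hnc : 4 * c < (n : ℝ) + 1 := by
    have h1 : 4 * c ≤ (Nat.ceil (4 * c) : ℝ) := Nat.le_ceil _
    have h2 : (Nat.ceil (4 * c) : ℝ) ≤ (n : ℝ) := by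
      exact_mod_cast Nat.cast_le.2 (le_max_right _ _)
    linarith
  -- the two head maps
  haveI := hWfd n
  haveI := hWfd (n + 1)
  obtain ⟨hd₁, hd₁W, hd₁H, hd₁n, hd₁u⟩ := head_lemma (Wn n) (KerSet (mz (Wn n))) Wtot
    (KerSet_closed _) (hmazlev n) (hcov n hn1)
  obtain ⟨hd₂, hd₂W, hd₂H, hd₂n, hd₂u⟩ := head_lemma (Wn (n+1)) (KerSet (mz (Wn (n+1)))) Wtot
    (KerSet_closed _) (hmazlev (n+1)) (hcov (n+1) (by omega))
  let Q : Wtot.topologicalClosure →L[ℝ] X := hd₂ - hd₁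
  have hQ_apply : ∀ z, Q z = hd₂ z - hd₁ z := fun z => rfl
  -- values of Q on the dense part lie in N n, and Q fixes N n
  haveI : FiniteDimensional ℝ (Nn n) := hNfd _ _
  have hNnWs : Nn n ≤ Wn (n+1) := by rw [hWs]; exact le_sup_right
  have hNnH : Nn n ≤ KerSet (mz (Wn n)) := htail n n hn1 le_rfl
  have hQmemW : ∀ z : Wtot.topologicalClosure, (z : X) ∈ Wtot → Q z ∈ Nn n := by
    intro z hz
    -- decompose z
    obtain ⟨m, hm⟩ := (Submodule.mem_iSup_of_chain Wo (z : X)).1 hz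
    have hm' : (z : X) ∈ Wn (max m (n+1)) := hWmono (le_max_left _ _) hm
    -- show by induction that elements of W m (m ≥ n+1) split
    have hsplit : ∀ k, ∀ x ∈ Wn (n + 1 + k), x ∈ Wn (n+1) ⊔
        (KerSet (mz (Wn n)) ⊓ KerSet (mz (Wn (n+1)))) := by
      intro k
      induction k with
      | zero => intro x hx; exact Submodule.mem_sup_left hx
      | succ k ih =>
        intro x hx
        rw [show n + 1 + (k + 1) = (n + 1 + k) + 1 from rfl, hWs] at hx
        obtain ⟨a, ha, b, hb, rfl⟩ := Submodule.mem_sup.1 hx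
        refine Submodule.add_mem _ (ih a ha) (Submodule.mem_sup_right ?_)
        refine Submodule.mem_inf.2 ⟨?_, ?_⟩
        · exact htail n (n+1+k) hn1 (by omega) hb
        · exact htail (n+1) (n+1+k) (by omega) (by omega) hb
    have hzsplit : (z : X) ∈ Wn (n+1) ⊔
        (KerSet (mz (Wn n)) ⊓ KerSet (mz (Wn (n+1)))) := by
      rcases le_or_gt (max m (n+1)) (n+1) with hle | hlt
      · exact Submodule.mem_sup_left (hWmono hle hm')
      · obtain ⟨k, hk⟩ := Nat.exists_eq_add_of_le (le_of_lt hlt)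
        rw [hk] at hm'
        exact hsplit k _ hm'
    obtain ⟨u, hu, t, ht, hzu⟩ := Submodule.mem_sup.1 hzsplit
    obtain ⟨htn, htn1⟩ := Submodule.mem_inf.1 ht
    -- head₂ z = u
    have h2u : hd₂ z = u := hd₂u z u hu (by rw [← hzu]; simpa using htn1)
    -- decompose u in Wn n ⊔ Nn n
    rw [hWs] at hu
    obtain ⟨w, hw, x, hxN, huw⟩ := Submodule.mem_sup.1 hu
    have h1w : hd₁ z = w := by
      refine hd₁u z w hw ?_
      have : (z : X) - w = x + t := by rw [← hzu, ← huw]; abel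
      rw [this]
      exact Submodule.add_mem _ (hNnH hxN) htn
    rw [hQ_apply, h2u, h1w, ← huw]
    simpa using hxN
  have hQmem : ∀ z : Wtot.topologicalClosure, Q z ∈ Nn n := by
    have hclosed : IsClosed {z : Wtot.topologicalClosure | Q z ∈ Nn n} :=
      IsClosed.preimage Q.continuous (Submodule.closed_of_finiteDimensional (Nn n))
    intro z
    have hdense : z ∈ closure {z : Wtot.topologicalClosure | (z : X) ∈ Wtot} := by
      rw [closure_subtype]
      have himg : Subtype.val '' {z : Wtot.topologicalClosure | (z : X) ∈ Wtot}
          = (Wtot : Set X) := by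
        ext x
        constructor
        · rintro ⟨z, hz, rfl⟩; exact hz
        · intro hx
          exact ⟨⟨x, Wtot.le_topologicalClosure hx⟩, hx, rfl⟩
      rw [himg, ← Submodule.topologicalClosure_coe]
      exact z.2
    exact closure_minimal (fun w hw => hQmemW w hw) hclosed hdense
  have hQfix : ∀ z : Wtot.topologicalClosure, (z : X) ∈ Nn n → Q z = (z : X) := by
    intro z hz
    have h2 : hd₂ z = (z : X) := hd₂u z (z : X) (hNnWs hz) (by simp)
    have h1 : hd₁ z = 0 := hd₁u z 0 (Submodule.zero_mem _) (by simpa using hNnH hz)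
    rw [hQ_apply, h2, h1, sub_zero]
  have hQnorm : ∀ z : Wtot.topologicalClosure, ‖Q z‖ ≤ 4 * ‖z‖ := by
    intro z
    rw [hQ_apply]
    calc ‖hd₂ z - hd₁ z‖ ≤ ‖hd₂ z‖ + ‖hd₁ z‖ := norm_sub_le _ _
      _ ≤ 2 * ‖z‖ + 2 * ‖z‖ := add_le_add (hd₂n z) (hd₁n z)
      _ = 4 * ‖z‖ := by ring
  let Qc : Wtot.topologicalClosure →L[ℝ] Nn n := Q.codRestrict (Nn n) hQmem
  -- the local map from the hypothesis
  obtain ⟨f, hfn, hffix⟩ := hloc (Mn n) (hMfd _ _)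
  let g : Mn n →L[ℝ] Nn n := Qc.comp f
  have hNnZ : Nn n ≤ Z := le_trans (le_trans hNnWs (hWtot_le (n+1)))
    (Wtot.le_topologicalClosure)
  have hgfix : ∀ x : Mn n, (x : X) ∈ Nn n → ((g x : Nn n) : X) = (x : X) := by
    intro x hx
    have hxZ : (x : X) ∈ Z := hNnZ hx
    have hfx : ((f x : Z) : X) = (x : X) := hffix x hxZ
    calc ((g x : Nn n) : X) = Q (f x) := rfl
      _ = ((f x : Z) : X) := hQfix (f x) (by rw [hfx]; exact hx)
      _ = (x : X) := hfx
  have hgnorm : ‖g‖ ≤ 4 * c := by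
    have hQc : ‖Qc‖ ≤ 4 := by
      refine ContinuousLinearMap.opNorm_le_bound _ (by norm_num) fun z => ?_
      show ‖Q z‖ ≤ 4 * ‖z‖
      exact hQnorm z
    calc ‖g‖ ≤ ‖Qc‖ * ‖f‖ := ContinuousLinearMap.opNorm_comp_le _ _
      _ ≤ 4 * c := mul_le_mul hQc hfn (norm_nonneg f) (by norm_num)
  have := hbadf (An n) ((n : ℝ) + 1) g hgfix
  linarith

end Aux

/-- Theorem 3.A.7: if every closed subspace of the real Banach space `X` is locally
complemented in `X`, then `P(X) = E(X) < ∞`. -/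
theorem projection_constant_eq_extension_constant
    [CompleteSpace X]
    (h : ∀ Z : Submodule ℝ X, IsClosed (Z : Set X) →
      ∃ c : ℝ, 0 < c ∧ LocallyComplemented X Z c) :
    PconstX X = EconstX X ∧ EconstX X < ∞ := by
  have heq : PconstX X = EconstX X := by
    unfold PconstX EconstX
    refine iSup_congr fun Y => iSup_congr fun hY => ?_
    haveI := hY
    exact sInf_proj_eq_sInf_ext Y
  refine ⟨heq, ?_⟩
  rw [← heq]
  obtain ⟨B, hB⟩ := exists_uniform_bound h
  have hbound : PconstX X ≤ (B.toNNReal : ℝ≥0∞) := by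
    unfold PconstX
    refine iSup_le fun Y => iSup_le fun hY => ?_
    obtain ⟨P, h1, h2, h3⟩ := hB Y hY
    refine le_trans (sInf_le ⟨P, h1, h2, rfl⟩) ?_
    refine ENNReal.coe_le_coe.2 ?_
    rw [← norm_toNNReal]
    exact Real.toNNReal_le_toNNReal h3
  exact lt_of_le_of_lt hbound ENNReal.coe_lt_top
end

section
/- Let X be a real Banach space and Z a closed subspace of X such that (a) Z is a c-Lipschitz retract of X, i.e., there exists a map r : X → X that is Lipschitz with constant c, satisfies r(x) ∈ Z for all x ∈ X and r(z) = z for all z ∈ Z, and (b) Z is complemented in its bidual, i.e., there exists a continuous linear map P : Z** → Z with P(ι_Z(z)) = z for all z ∈ Z, where ι_Z : Z → Z** is the canonical embedding. Then Z is complemented in X by a continuous linear projection. -/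
open scoped NNReal
open NormedSpace

universe u v

section Mean

variable (G : Type v) [AddCommGroup G]

/-- The submodule of bounded real-valued functions on `G`. -/
def BddF : Submodule ℝ (G → ℝ) where
  carrier := {f | ∃ C : ℝ, ∀ y, |f y| ≤ C}
  add_mem' := by
    rintro f g ⟨C, hC⟩ ⟨D, hD⟩
    exact ⟨C + D, fun y => (abs_add_le _ _).trans (add_le_add (hC y) (hD y))⟩
  zero_mem' := ⟨0, by simp⟩
  smul_mem' := by
    rintro c f ⟨C, hC⟩
    exact ⟨|c| * C, fun y => by
      simp only [Pi.smul_apply, smul_eq_mul, abs_mul]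
      exact mul_le_mul_of_nonneg_left (hC y) (abs_nonneg c)⟩

variable {G}

/-- sup over `y` of the average of `f` over translates `y + a i`. -/
noncomputable def avgSup (f : G → ℝ) (n : ℕ) (a : Fin n → G) : ℝ :=
  sSup (Set.range fun y => (∑ i, f (y + a i)) / n)

noncomputable def pSet (f : G → ℝ) : Set ℝ :=
  {M : ℝ | ∃ (n : ℕ) (_ : 0 < n) (a : Fin n → G), M = avgSup f n a}

noncomputable def pFn (f : ↥(BddF G)) : ℝ := sInf (pSet (f : G → ℝ))

lemma bddF_bound (f : ↥(BddF G)) : ∃ C : ℝ, 0 ≤ C ∧ ∀ y, |(f : G → ℝ) y| ≤ C := by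
  obtain ⟨C, hC⟩ := f.2
  exact ⟨C, le_trans (abs_nonneg _) (hC 0), hC⟩

lemma avg_bddAbove {f : G → ℝ} {C : ℝ} (hC : ∀ y, f y ≤ C) (n : ℕ) (hn : 0 < n)
    (a : Fin n → G) : BddAbove (Set.range fun y => (∑ i, f (y + a i)) / n) := by
  refine ⟨C, ?_⟩
  rintro x ⟨y, rfl⟩
  rw [div_le_iff₀ (by positivity)]
  calc (∑ i, f (y + a i)) ≤ ∑ _i : Fin n, C := Finset.sum_le_sum fun i _ => hC _
  _ = n * C := by simp [mul_comm]
  _ = C * n := by ring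

lemma avgSup_le {f : G → ℝ} {C : ℝ} (hC : ∀ y, f y ≤ C) {n : ℕ} (hn : 0 < n)
    {a : Fin n → G} : avgSup f n a ≤ C := by
  apply csSup_le (Set.range_nonempty _)
  rintro x ⟨y, rfl⟩
  rw [div_le_iff₀ (by positivity)]
  calc (∑ i, f (y + a i)) ≤ ∑ _i : Fin n, C := Finset.sum_le_sum fun i _ => hC _
  _ = n * C := by simp [mul_comm]
  _ = C * n := by ring

lemma le_avgSup {f : G → ℝ} {C : ℝ} (hC : ∀ y, f y ≤ C) {n : ℕ} (hn : 0 < n)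
    {a : Fin n → G} {D : ℝ} (hD : ∀ y, D ≤ f y) : D ≤ avgSup f n a := by
  refine le_trans ?_ (le_csSup (avg_bddAbove hC n hn a) ⟨0, rfl⟩)
  rw [le_div_iff₀ (by positivity)]
  calc D * n = (n : ℝ) * D := by ring
  _ = ∑ _i : Fin n, D := by simp [mul_comm]
  _ ≤ ∑ i, f ((0 : G) + a i) := Finset.sum_le_sum fun i _ => hD _

lemma pSet_nonempty (f : G → ℝ) : (pSet f).Nonempty :=
  ⟨avgSup f 1 (fun _ => 0), 1, one_pos, fun _ => 0, rfl⟩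

lemma pSet_bddBelow (f : ↥(BddF G)) : BddBelow (pSet (f : G → ℝ)) := by
  obtain ⟨C, _, hC⟩ := bddF_bound f
  refine ⟨-C, ?_⟩
  rintro M ⟨n, hn, a, rfl⟩
  exact le_avgSup (fun y => (abs_le.1 (hC y)).2) hn (fun y => (abs_le.1 (hC y)).1)

lemma pFn_le (f : ↥(BddF G)) {M : ℝ} (hM : M ∈ pSet (f : G → ℝ)) : pFn f ≤ M :=
  csInf_le (pSet_bddBelow f) hM

lemma pFn_le_of_le (f : ↥(BddF G)) {C : ℝ} (hC : ∀ y, (f : G → ℝ) y ≤ C) : pFn f ≤ C := by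
  refine le_trans (pFn_le f ⟨1, one_pos, fun _ => 0, rfl⟩) (avgSup_le hC one_pos)

end Mean
section Mean2
variable {G : Type v} [AddCommGroup G]

lemma avg_le_nsmul_avgSup {f : G → ℝ} {C : ℝ} (hC : ∀ y, f y ≤ C) {n : ℕ} (hn : 0 < n)
    (a : Fin n → G) (y : G) : (∑ i, f (y + a i)) ≤ n * avgSup f n a := by
  have h1 : (∑ i, f (y + a i)) / n ≤ avgSup f n a :=
    le_csSup (avg_bddAbove hC n hn a) ⟨y, rfl⟩
  rw [div_le_iff₀ (by positivity)] at h1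
  linarith [h1]

lemma pFn_add (f g : ↥(BddF G)) : pFn (f + g) ≤ pFn f + pFn g := by
  refine le_of_forall_pos_le_add fun ε hε => ?_
  obtain ⟨M1, hM1mem, hM1⟩ := Real.lt_sInf_add_pos (pSet_nonempty (f : G → ℝ)) (half_pos hε)
  obtain ⟨M2, hM2mem, hM2⟩ := Real.lt_sInf_add_pos (pSet_nonempty (g : G → ℝ)) (half_pos hε)
  obtain ⟨n, hn, a, rfl⟩ := hM1mem
  obtain ⟨m, hm, b, rfl⟩ := hM2mem
  obtain ⟨Cf, _, hCf⟩ := bddF_bound f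
  obtain ⟨Cg, _, hCg⟩ := bddF_bound g
  have hfC : ∀ y, (f : G → ℝ) y ≤ Cf := fun y => (abs_le.1 (hCf y)).2
  have hgC : ∀ y, (g : G → ℝ) y ≤ Cg := fun y => (abs_le.1 (hCg y)).2
  have hnm : 0 < n * m := Nat.mul_pos hn hm
  set c : Fin (n * m) → G := fun k => a (finProdFinEquiv.symm k).1 + b (finProdFinEquiv.symm k).2
    with hc
  have key : avgSup ((f + g : ↥(BddF G)) : G → ℝ) (n * m) c ≤
      avgSup (f : G → ℝ) n a + avgSup (g : G → ℝ) m b := by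
    apply csSup_le (Set.range_nonempty _)
    rintro x ⟨y, rfl⟩
    have hre : ∀ (h : G → ℝ), (∑ k, h (y + c k)) =
        ∑ p : Fin n × Fin m, h (y + (a p.1 + b p.2)) := by
      intro h
      rw [← Equiv.sum_comp finProdFinEquiv (fun k => h (y + c k))]
      exact Finset.sum_congr rfl fun p _ => by rw [hc]; simp
    have hf1 : (∑ k, (f : G → ℝ) (y + c k)) ≤ (n * m : ℕ) * avgSup (f : G → ℝ) n a := by
      rw [hre, Fintype.sum_prod_type, Finset.sum_comm]
      calc ∑ j : Fin m, ∑ i : Fin n, (f : G → ℝ) (y + (a i + b j))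
          ≤ ∑ _j : Fin m, (n : ℝ) * avgSup (f : G → ℝ) n a := by
            apply Finset.sum_le_sum
            intro j _
            have := avg_le_nsmul_avgSup hfC hn a (y + b j)
            calc ∑ i : Fin n, (f : G → ℝ) (y + (a i + b j))
                = ∑ i : Fin n, (f : G → ℝ) ((y + b j) + a i) :=
                  Finset.sum_congr rfl fun i _ => by rw [add_assoc, add_comm (a i) (b j), ← add_assoc]
              _ ≤ n * avgSup (f : G → ℝ) n a := this
        _ = (n * m : ℕ) * avgSup (f : G → ℝ) n a := by
            simp [Finset.sum_const]
            push_cast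
            ring
    have hg1 : (∑ k, (g : G → ℝ) (y + c k)) ≤ (n * m : ℕ) * avgSup (g : G → ℝ) m b := by
      rw [hre, Fintype.sum_prod_type]
      calc ∑ i : Fin n, ∑ j : Fin m, (g : G → ℝ) (y + (a i + b j))
          ≤ ∑ _i : Fin n, (m : ℝ) * avgSup (g : G → ℝ) m b := by
            apply Finset.sum_le_sum
            intro i _
            have := avg_le_nsmul_avgSup hgC hm b (y + a i)
            calc ∑ j : Fin m, (g : G → ℝ) (y + (a i + b j))
                = ∑ j : Fin m, (g : G → ℝ) ((y + a i) + b j) :=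
                  Finset.sum_congr rfl fun j _ => by rw [add_assoc]
              _ ≤ m * avgSup (g : G → ℝ) m b := this
        _ = (n * m : ℕ) * avgSup (g : G → ℝ) m b := by
            simp [Finset.sum_const]
            push_cast
            ring
    have hsplit : (∑ k, ((f + g : ↥(BddF G)) : G → ℝ) (y + c k))
        = (∑ k, (f : G → ℝ) (y + c k)) + (∑ k, (g : G → ℝ) (y + c k)) := by
      rw [← Finset.sum_add_distrib]
      exact Finset.sum_congr rfl fun k _ => rfl
    rw [div_le_iff₀ (by positivity : (0:ℝ) < (n*m : ℕ))]
    rw [hsplit]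
    calc (∑ k, (f : G → ℝ) (y + c k)) + (∑ k, (g : G → ℝ) (y + c k))
        ≤ (n * m : ℕ) * avgSup (f : G → ℝ) n a + (n * m : ℕ) * avgSup (g : G → ℝ) m b :=
          add_le_add hf1 hg1
      _ = (avgSup (f : G → ℝ) n a + avgSup (g : G → ℝ) m b) * (n * m : ℕ) := by ring
  have h2 : pFn (f + g) ≤ avgSup (f : G → ℝ) n a + avgSup (g : G → ℝ) m b :=
    le_trans (pFn_le (f + g) ⟨n * m, hnm, c, rfl⟩) key
  have e1 : pFn f = sInf (pSet (f : G → ℝ)) := rfl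
  have e2 : pFn g = sInf (pSet (g : G → ℝ)) := rfl
  linarith

end Mean2
section Mean3
open scoped Pointwise
variable {G : Type v} [AddCommGroup G]

lemma avgSup_smul {t : ℝ} (ht : 0 ≤ t) (f : G → ℝ) (n : ℕ) (a : Fin n → G) :
    avgSup (t • f) n a = t * avgSup f n a := by
  unfold avgSup
  have h : (fun y => (∑ i, (t • f) (y + a i)) / n) = fun y => t • ((∑ i, f (y + a i)) / n) := by
    funext y
    simp only [Pi.smul_apply, smul_eq_mul, ← Finset.mul_sum, mul_div_assoc]
  rw [h, ← Set.smul_set_range, Real.sSup_smul_of_nonneg ht, smul_eq_mul]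

lemma pFn_smul {t : ℝ} (ht : 0 < t) (f : ↥(BddF G)) : pFn (t • f) = t * pFn f := by
  have hset : pSet ((t • f : ↥(BddF G)) : G → ℝ) = t • pSet (f : G → ℝ) := by
    ext M
    constructor
    · rintro ⟨n, hn, a, rfl⟩
      refine ⟨avgSup (f : G → ℝ) n a, ⟨n, hn, a, ?_⟩, ?_⟩
      · rfl
      · show t • avgSup ((f : G → ℝ)) n a = avgSup ((t • f : ↥(BddF G)) : G → ℝ) n a
        rw [smul_eq_mul, ← avgSup_smul ht.le]
        rfl
    · rintro ⟨M', ⟨n, hn, a, rfl⟩, rfl⟩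
      refine ⟨n, hn, a, ?_⟩
      show t • avgSup ((f : G → ℝ)) n a = avgSup ((t • f : ↥(BddF G)) : G → ℝ) n a
      rw [smul_eq_mul, ← avgSup_smul ht.le]
      rfl
  unfold pFn
  rw [hset, Real.sInf_smul_of_nonneg ht.le, smul_eq_mul]

/-- the constant function `1` as an element of `BddF G`. -/
def constOne : ↥(BddF G) := ⟨fun _ => (1 : ℝ), ⟨1, fun _ => by simp⟩⟩

lemma pFn_const (t : ℝ) : pFn (t • (constOne : ↥(BddF G))) = t := by
  have hval : ((t • (constOne : ↥(BddF G))) : G → ℝ) = fun _ => t := by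
    funext y; simp [constOne]
  have havg : ∀ (n : ℕ), 0 < n → ∀ (a : Fin n → G),
      avgSup ((t • (constOne : ↥(BddF G))) : G → ℝ) n a = t := by
    intro n hn a
    unfold avgSup
    have : (fun y => (∑ i, ((t • (constOne : ↥(BddF G))) : G → ℝ) (y + a i)) / n)
        = fun _ : G => t := by
      funext y
      rw [hval]
      rw [Finset.sum_const]
      simp
      rw [mul_comm, mul_div_assoc, div_self (by positivity : (n:ℝ) ≠ 0), mul_one]
    rw [this, Set.range_const, csSup_singleton]
  have hset : pSet ((t • (constOne : ↥(BddF G))) : G → ℝ) = {t} := by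
    ext M
    constructor
    · rintro ⟨n, hn, a, rfl⟩
      exact havg n hn a
    · rintro rfl
      exact ⟨1, one_pos, fun _ => 0, (havg 1 one_pos _).symm⟩
  unfold pFn
  rw [Submodule.coe_smul, hset, csInf_singleton]

lemma pFn_sub_shift_le (f g : ↥(BddF G)) (a : G)
    (hg : ∀ y, (g : G → ℝ) y = (f : G → ℝ) (y + a)) : pFn (g - f) ≤ 0 := by
  obtain ⟨C, hC0, hC⟩ := bddF_bound f
  refine le_of_forall_pos_le_add fun ε hε => ?_
  obtain ⟨n, hn⟩ := exists_nat_gt (2 * C / ε)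
  have hnpos : 0 < n := by
    by_contra h
    push_neg at h
    interval_cases n
    simp at hn
    nlinarith [div_nonneg (by linarith : (0:ℝ) ≤ 2 * C) hε.le]
  set am : Fin n → G := fun i => (i : ℕ) • a with ham
  have key : avgSup ((g - f : ↥(BddF G)) : G → ℝ) n am ≤ 2 * C / n := by
    apply csSup_le (Set.range_nonempty _)
    rintro x ⟨y, rfl⟩
    dsimp only
    have hsum : (∑ i, ((g - f : ↥(BddF G)) : G → ℝ) (y + am i))
        = (f : G → ℝ) (y + n • a) - (f : G → ℝ) (y + 0 • a) := by
      rw [Fin.sum_univ_eq_sum_range (fun i => ((g - f : ↥(BddF G)) : G → ℝ) (y + (i : ℕ) • a))]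
      rw [← Finset.sum_range_sub (fun i : ℕ => (f : G → ℝ) (y + i • a))]
      apply Finset.sum_congr rfl
      intro i _
      have : ((g - f : ↥(BddF G)) : G → ℝ) (y + i • a)
          = (g : G → ℝ) (y + i • a) - (f : G → ℝ) (y + i • a) := rfl
      rw [this, hg]
      congr 2
      rw [add_assoc, ← succ_nsmul]
    rw [hsum]
    rw [div_le_div_iff_of_pos_right (by positivity : (0:ℝ) < n)]
    have h1 := abs_le.1 (hC (y + n • a))
    have h2 := abs_le.1 (hC (y + 0 • a))
    linarith [h1.1, h1.2, h2.1, h2.2]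
  have h3 : pFn (g - f) ≤ 2 * C / n := le_trans (pFn_le _ ⟨n, hnpos, am, rfl⟩) key
  have h4 : 2 * C / n < ε := by
    rw [div_lt_iff₀ (by positivity : (0:ℝ) < n)]
    rw [div_lt_iff₀ hε] at hn
    linarith
  linarith

end Mean3
section Mean4
variable {G : Type v} [AddCommGroup G]

theorem exists_invariant_mean (G : Type v) [AddCommGroup G] :
    ∃ m : ↥(BddF G) →ₗ[ℝ] ℝ,
      (∀ f : ↥(BddF G), ∀ C : ℝ, (∀ y, (f : G → ℝ) y ≤ C) → m f ≤ C) ∧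
      (∀ (f g : ↥(BddF G)) (a : G), (∀ y, (g : G → ℝ) y = (f : G → ℝ) (y + a)) → m g = m f) := by
  have hone : (constOne : ↥(BddF G)) ≠ 0 := by
    intro h
    have := congrFun (congrArg (Subtype.val) h) 0
    simp [constOne] at this
  set f0 : ↥(BddF G) →ₗ.[ℝ] ℝ :=
    LinearPMap.mkSpanSingleton' (constOne : ↥(BddF G)) (1 : ℝ)
      (by
        intro c hc
        have := congrFun (congrArg (Subtype.val) hc) 0
        simp [constOne] at this
        simp [this]) with hf0
  obtain ⟨m, hm1, hm2⟩ := exists_extension_of_le_sublinear f0 pFn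
    (fun t ht f => pFn_smul ht f)
    (fun f g => pFn_add f g)
    (by
      rintro ⟨v, hv⟩
      rw [LinearPMap.domain_mkSpanSingleton] at hv
      obtain ⟨t, rfl⟩ := Submodule.mem_span_singleton.1 hv
      have happ : f0 ⟨t • (constOne : ↥(BddF G)), hv⟩ = t • (1 : ℝ) :=
        LinearPMap.mkSpanSingleton'_apply _ _ _ t _
      rw [happ, pFn_const, smul_eq_mul, mul_one])
  refine ⟨m, ?_, ?_⟩
  · intro f C hC
    exact le_trans (hm2 f) (pFn_le_of_le f hC)
  · intro f g a hg
    have h1 : m (g - f) ≤ 0 := le_trans (hm2 _) (pFn_sub_shift_le f g a hg)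
    have h2 : m (f - g) ≤ 0 := by
      have e : f - g = -g - -f := by abel
      rw [e]
      refine le_trans (hm2 _) (pFn_sub_shift_le (-f) (-g) a ?_)
      intro y
      show -((g : G → ℝ) y) = -((f : G → ℝ) (y + a))
      rw [hg]
    have e1 : m (g - f) = m g - m f := by rw [map_sub]
    have e2 : m (f - g) = m f - m g := by rw [map_sub]
    rw [e1] at h1
    rw [e2] at h2
    linarith

end Mean4

section Main

set_option maxHeartbeats 2000000 in
/-- Corollary 3.B.7: if a closed subspace `Z` of a real Banach space `X` is a
`c`-Lipschitz retract of `X` and is complemented in its bidual, then `Z` is complemented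
in `X` by a continuous linear projection. -/
theorem lipschitz_retract_and_bidual_complemented_implies_complemented
    (X : Type u) [NormedAddCommGroup X] [NormedSpace ℝ X] [CompleteSpace X]
    (Z : Submodule ℝ X) (hZ : IsClosed (Z : Set X)) (c : ℝ≥0)
    (hretract : ∃ r : X → X, LipschitzWith c r ∧ (∀ x : X, r x ∈ Z) ∧
      ∀ z : X, z ∈ Z → r z = z)
    (hbidual : ∃ P : StrongDual ℝ (StrongDual ℝ Z) →L[ℝ] Z,
      ∀ z : Z, P (inclusionInDoubleDual ℝ Z z) = z) :
    ∃ Q : X →L[ℝ] X, Q.comp Q = Q ∧ LinearMap.range (Q : X →ₗ[ℝ] X) = Z := by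
  classical
  letI : NormedSpace ℝ ↥Z := inferInstance
  obtain ⟨r, hlip, hmem, hfix⟩ := hretract
  obtain ⟨P, hP⟩ := hbidual
  obtain ⟨mZ, hmZ_le, hmZ_inv⟩ := exists_invariant_mean ↥Z
  obtain ⟨mX, hmX_le, hmX_inv⟩ := exists_invariant_mean X
  -- two-sided bounds for the means
  have mZ_abs : ∀ (f : ↥(BddF ↥Z)) (C : ℝ), (∀ y, |(f : ↥Z → ℝ) y| ≤ C) → |mZ f| ≤ C := by
    intro f C hC
    rw [abs_le]
    constructor
    · have : mZ (-f) ≤ C := hmZ_le (-f) C (fun y => by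
        have := (abs_le.1 (hC y)).1
        show -((f : ↥Z → ℝ) y) ≤ C
        linarith)
      rw [map_neg] at this
      linarith
    · exact hmZ_le f C (fun y => (abs_le.1 (hC y)).2)
  have mX_abs : ∀ (f : ↥(BddF X)) (C : ℝ), (∀ y, |(f : X → ℝ) y| ≤ C) → |mX f| ≤ C := by
    intro f C hC
    rw [abs_le]
    constructor
    · have : mX (-f) ≤ C := hmX_le (-f) C (fun y => by
        have := (abs_le.1 (hC y)).1
        show -((f : X → ℝ) y) ≤ C
        linarith)
      rw [map_neg] at this
      linarith
    · exact hmX_le f C (fun y => (abs_le.1 (hC y)).2)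
  have mX_const : ∀ t : ℝ, mX (t • (constOne : ↥(BddF X))) = t := by
    intro t
    rw [map_smul, smul_eq_mul]
    have h1 : mX (constOne : ↥(BddF X)) ≤ 1 := hmX_le _ 1 (fun y => le_refl 1)
    have h2 : mX (-(constOne : ↥(BddF X))) ≤ -1 := hmX_le _ (-1) (fun y => le_refl (-1))
    rw [map_neg] at h2
    have : mX (constOne : ↥(BddF X)) = 1 := le_antisymm h1 (by linarith)
    rw [this, mul_one]
  have mZ_const : ∀ t : ℝ, mZ (t • (constOne : ↥(BddF ↥Z))) = t := by
    intro t
    rw [map_smul, smul_eq_mul]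
    have h1 : mZ (constOne : ↥(BddF ↥Z)) ≤ 1 := hmZ_le _ 1 (fun y => le_refl 1)
    have h2 : mZ (-(constOne : ↥(BddF ↥Z))) ≤ -1 := hmZ_le _ (-1) (fun y => le_refl (-1))
    rw [map_neg] at h2
    have : mZ (constOne : ↥(BddF ↥Z)) = 1 := le_antisymm h1 (by linarith)
    rw [this, mul_one]
  -- the retraction as a map into the subtype
  set rz : X → ↥Z := fun x => ⟨r x, hmem x⟩ with hrz
  have hrz_dist : ∀ x x' : X, ‖rz x - rz x'‖ ≤ c * ‖x - x'‖ := by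
    intro x x'
    have h := hlip.dist_le_mul x x'
    rw [dist_eq_norm, dist_eq_norm] at h
    calc ‖rz x - rz x'‖ = ‖r x - r x'‖ := by rw [Submodule.coe_norm]; rfl
      _ ≤ c * ‖x - x'‖ := h
  have hrz_fix : ∀ y : ↥Z, rz ↑y = y := fun y => Subtype.ext (hfix _ y.2)
  -- the first mean construction: w x φ
  have memfI : ∀ (x : X) (φ : StrongDual ℝ ↥Z),
      (fun y : ↥Z => φ (rz (x + ↑y) - y)) ∈ BddF ↥Z := by
    intro x φ
    refine ⟨‖φ‖ * (c * ‖x‖), fun y => ?_⟩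
    have h1 : ‖φ (rz (x + ↑y) - y)‖ ≤ ‖φ‖ * ‖rz (x + ↑y) - y‖ := φ.le_opNorm _
    rw [Real.norm_eq_abs] at h1
    refine h1.trans (mul_le_mul_of_nonneg_left ?_ (norm_nonneg φ))
    calc ‖rz (x + ↑y) - y‖ = ‖rz (x + ↑y) - rz ↑y‖ := by rw [hrz_fix]
      _ ≤ c * ‖x + ↑y - ↑y‖ := hrz_dist _ _
      _ = c * ‖x‖ := by rw [add_sub_cancel_right]
  set w : X → StrongDual ℝ ↥Z → ℝ := fun x φ => mZ ⟨_, memfI x φ⟩ with hw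
  have wdiff : ∀ (x x' : X) (φ : StrongDual ℝ ↥Z),
      |w x φ - w x' φ| ≤ ‖φ‖ * (c * ‖x - x'‖) := by
    intro x x' φ
    rw [← map_sub]
    apply mZ_abs
    intro y
    show |φ (rz (x + ↑y) - y) - φ (rz (x' + ↑y) - y)| ≤ _
    rw [← map_sub]
    have h1 : ‖φ (rz (x + ↑y) - y - (rz (x' + ↑y) - y))‖ ≤
        ‖φ‖ * ‖rz (x + ↑y) - y - (rz (x' + ↑y) - y)‖ := φ.le_opNorm _
    rw [Real.norm_eq_abs] at h1
    refine h1.trans (mul_le_mul_of_nonneg_left ?_ (norm_nonneg φ))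
    have e : rz (x + ↑y) - y - (rz (x' + ↑y) - y) = rz (x + ↑y) - rz (x' + ↑y) := by abel
    rw [e]
    calc ‖rz (x + ↑y) - rz (x' + ↑y)‖ ≤ c * ‖x + ↑y - (x' + ↑y)‖ := hrz_dist _ _
      _ = c * ‖x - x'‖ := by rw [add_sub_add_right_eq_sub]
  have wzero : ∀ φ : StrongDual ℝ ↥Z, w 0 φ = 0 := by
    intro φ
    have : (⟨_, memfI 0 φ⟩ : ↥(BddF ↥Z)) = 0 := by
      apply Subtype.ext
      funext y
      show φ (rz (0 + ↑y) - y) = 0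
      rw [zero_add, hrz_fix, sub_self, map_zero]
    show mZ ⟨_, memfI 0 φ⟩ = 0
    rw [this, map_zero]
  have wbound : ∀ (x : X) (φ : StrongDual ℝ ↥Z), |w x φ| ≤ ‖φ‖ * (c * ‖x‖) := by
    intro x φ
    have := wdiff x 0 φ
    rw [wzero, sub_zero, sub_zero] at this
    exact this
  have wadd : ∀ (x : X) (φ ψ : StrongDual ℝ ↥Z), w x (φ + ψ) = w x φ + w x ψ := by
    intro x φ ψ
    rw [hw, ← map_add]
    exact congrArg mZ (Subtype.ext (funext fun y => by
      show (φ + ψ) (rz (x + ↑y) - y) = φ (rz (x + ↑y) - y) + ψ (rz (x + ↑y) - y)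
      simp))
  have wsmul : ∀ (x : X) (t : ℝ) (φ : StrongDual ℝ ↥Z), w x (t • φ) = t * w x φ := by
    intro x t φ
    rw [hw, ← smul_eq_mul, ← map_smul]
    exact congrArg mZ (Subtype.ext (funext fun y => by
      show (t • φ) (rz (x + ↑y) - y) = t • (φ (rz (x + ↑y) - y))
      simp))
  have wshift : ∀ (x : X) (z : ↥Z) (φ : StrongDual ℝ ↥Z), w (x + ↑z) φ = w x φ + φ z := by
    intro x z φ
    have key : (⟨_, memfI (x + ↑z) φ⟩ : ↥(BddF ↥Z)) - (φ z) • constOne =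
        (⟨_, memfI (x + ↑z) φ⟩ : ↥(BddF ↥Z)) - (φ z) • constOne := rfl
    have hinv : mZ ((⟨_, memfI (x + ↑z) φ⟩ : ↥(BddF ↥Z)) - (φ z) • constOne)
        = mZ ⟨_, memfI x φ⟩ := by
      apply hmZ_inv ⟨_, memfI x φ⟩ _ z
      intro y
      show φ (rz (x + ↑z + ↑y) - y) - (φ z) * 1 = φ (rz (x + ↑(y + z)) - (y + z))
      have e1 : (x + ↑z + ↑y : X) = x + ↑(y + z) := by
        push_cast
        abel
      rw [e1, mul_one]
      have e2 : rz (x + ↑(y + z)) - y = (rz (x + ↑(y + z)) - (y + z)) + z := by abel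
      rw [e2, map_add]
      ring
    rw [map_sub, map_smul, smul_eq_mul] at hinv
    have hconst : mZ (constOne : ↥(BddF ↥Z)) = 1 := by
      have := mZ_const 1
      rwa [one_smul] at this
    rw [hconst, mul_one] at hinv
    rw [hw]
    show mZ ⟨_, memfI (x + ↑z) φ⟩ = mZ ⟨_, memfI x φ⟩ + φ z
    linarith [hinv]
  -- the second mean construction: F x φ
  have memfJ : ∀ (x : X) (φ : StrongDual ℝ ↥Z),
      (fun y : X => w (x + y) φ - w y φ) ∈ BddF X := by
    intro x φ
    refine ⟨‖φ‖ * (c * ‖x‖), fun y => ?_⟩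
    have := wdiff (x + y) y φ
    rwa [add_sub_cancel_right] at this
  set F : X → StrongDual ℝ ↥Z → ℝ := fun x φ => mX ⟨_, memfJ x φ⟩ with hF
  have Fadd : ∀ (x₁ x₂ : X) (φ : StrongDual ℝ ↥Z), F (x₁ + x₂) φ = F x₁ φ + F x₂ φ := by
    intro x₁ x₂ φ
    have hAmem : (fun y : X => w (x₁ + x₂ + y) φ - w (x₂ + y) φ) ∈ BddF X := by
      refine ⟨‖φ‖ * (c * ‖x₁‖), fun y => ?_⟩
      have := wdiff (x₁ + x₂ + y) (x₂ + y) φ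
      have e : x₁ + x₂ + y - (x₂ + y) = x₁ := by abel
      rwa [e] at this
    have hsplit : (⟨_, memfJ (x₁ + x₂) φ⟩ : ↥(BddF X)) = ⟨_, hAmem⟩ + ⟨_, memfJ x₂ φ⟩ := by
      apply Subtype.ext
      funext y
      show w (x₁ + x₂ + y) φ - w y φ =
        (w (x₁ + x₂ + y) φ - w (x₂ + y) φ) + (w (x₂ + y) φ - w y φ)
      ring
    have hinv : mX (⟨_, hAmem⟩ : ↥(BddF X)) = mX ⟨_, memfJ x₁ φ⟩ := by
      apply hmX_inv ⟨_, memfJ x₁ φ⟩ _ x₂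
      intro y
      show w (x₁ + x₂ + y) φ - w (x₂ + y) φ = w (x₁ + (y + x₂)) φ - w (y + x₂) φ
      have e1 : x₁ + x₂ + y = x₁ + (y + x₂) := by abel
      have e2 : x₂ + y = y + x₂ := by abel
      rw [e1, e2]
    rw [hF]
    show mX ⟨_, memfJ (x₁ + x₂) φ⟩ = mX ⟨_, memfJ x₁ φ⟩ + mX ⟨_, memfJ x₂ φ⟩
    rw [hsplit, map_add, hinv]
  have Fbound : ∀ (x : X) (φ : StrongDual ℝ ↥Z), |F x φ| ≤ ‖φ‖ * (c * ‖x‖) := by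
    intro x φ
    apply mX_abs
    intro y
    show |w (x + y) φ - w y φ| ≤ _
    have := wdiff (x + y) y φ
    rwa [add_sub_cancel_right] at this
  have Fphi_add : ∀ (x : X) (φ ψ : StrongDual ℝ ↥Z), F x (φ + ψ) = F x φ + F x ψ := by
    intro x φ ψ
    rw [hF, ← map_add]
    exact congrArg mX (Subtype.ext (funext fun y => by
      show w (x + y) (φ + ψ) - w y (φ + ψ) =
        (w (x + y) φ - w y φ) + (w (x + y) ψ - w y ψ)
      rw [wadd, wadd]
      ring))
  have Fphi_smul : ∀ (x : X) (t : ℝ) (φ : StrongDual ℝ ↥Z), F x (t • φ) = t * F x φ := by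
    intro x t φ
    rw [hF, ← smul_eq_mul, ← map_smul]
    exact congrArg mX (Subtype.ext (funext fun y => by
      show w (x + y) (t • φ) - w y (t • φ) = t • (w (x + y) φ - w y φ)
      rw [wsmul, wsmul, smul_eq_mul]
      ring))
  have FZ : ∀ (z : ↥Z) (φ : StrongDual ℝ ↥Z), F ↑z φ = φ z := by
    intro z φ
    have : (⟨_, memfJ ↑z φ⟩ : ↥(BddF X)) = (φ z) • constOne := by
      apply Subtype.ext
      funext y
      show w (↑z + y) φ - w y φ = (φ z) * 1
      rw [add_comm, wshift y z φ, mul_one]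
      ring
    rw [hF]
    show mX ⟨_, memfJ ↑z φ⟩ = φ z
    rw [this, mX_const]
  -- package as a continuous linear map
  set Fx : X → StrongDual ℝ (StrongDual ℝ ↥Z) := fun x => LinearMap.mkContinuous
    { toFun := fun φ => F x φ
      map_add' := fun φ ψ => Fphi_add x φ ψ
      map_smul' := fun t φ => Fphi_smul x t φ }
    (c * ‖x‖) (fun φ => by
      rw [Real.norm_eq_abs]
      calc |F x φ| ≤ ‖φ‖ * (c * ‖x‖) := Fbound x φ
        _ = c * ‖x‖ * ‖φ‖ := by ring) with hFx
  have Fx_apply : ∀ (x : X) (φ : StrongDual ℝ ↥Z), Fx x φ = F x φ := fun x φ => rfl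
  have FxAdd : ∀ x₁ x₂ : X, Fx (x₁ + x₂) = Fx x₁ + Fx x₂ := by
    intro x₁ x₂
    ext φ
    rw [ContinuousLinearMap.add_apply, Fx_apply, Fx_apply, Fx_apply, Fadd]
  set Fhom : X →+ StrongDual ℝ (StrongDual ℝ ↥Z) := AddMonoidHom.mk' Fx FxAdd with hFhom
  have Fnorm : ∀ x : X, ‖Fx x‖ ≤ c * ‖x‖ := by
    intro x
    apply ContinuousLinearMap.opNorm_le_bound _ (by positivity)
    intro φ
    rw [Fx_apply, Real.norm_eq_abs]
    calc |F x φ| ≤ ‖φ‖ * (c * ‖x‖) := Fbound x φ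
      _ = c * ‖x‖ * ‖φ‖ := by ring
  have Fcont : Continuous Fx := by
    have : LipschitzWith c Fx := by
      apply LipschitzWith.of_dist_le_mul
      intro x₁ x₂
      rw [dist_eq_norm, dist_eq_norm]
      have e : Fx x₁ - Fx x₂ = Fx (x₁ - x₂) := (eq_sub_of_add_eq (a := Fx (x₁ - x₂)) (b := Fx x₁) (c := Fx x₂) (by rw [← FxAdd, sub_add_cancel])).symm
      rw [e]
      exact Fnorm _
    exact this.continuous
  set FL : X →L[ℝ] StrongDual ℝ (StrongDual ℝ ↥Z) := AddMonoidHom.toRealLinearMap (E := X) (F := StrongDual ℝ (StrongDual ℝ ↥Z)) Fhom Fcont with hFL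
  have FL_apply : ∀ x : X, FL x = Fx x := fun x => rfl
  have hFLZ : ∀ z : ↥Z, FL ↑z = inclusionInDoubleDual ℝ ↥Z z := by
    intro z
    ext φ
    rw [FL_apply, Fx_apply, FZ, dual_def]
  -- the projection
  set Q : X →L[ℝ] X := Z.subtypeL.comp (P.comp FL) with hQ
  have hQmem : ∀ x : X, Q x ∈ Z := fun x => (P (FL x)).2
  have hQfix : ∀ z : ↥Z, Q ↑z = ↑z := by
    intro z
    rw [hQ]
    show ↑(P (FL ↑z)) = (↑z : X)
    rw [hFLZ, hP]
  refine ⟨Q, ?_, ?_⟩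
  · ext x
    show Q (Q x) = Q x
    have : Q x = ↑(⟨Q x, hQmem x⟩ : ↥Z) := rfl
    rw [this, hQfix]
  · apply le_antisymm
    · rintro _ ⟨x, rfl⟩
      exact hQmem x
    · intro z hz
      exact ⟨z, by rw [show z = ↑(⟨z, hz⟩ : ↥Z) from rfl]; exact hQfix _⟩

end Main
end
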